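/- arXiv:1312.7653 — 4 statements merged into one kernel-verified Lean document; each statement's English description precedes it below -/
import Mathlib

section
/- Fix a finite alphabet K, genome length n, X = (Fin n → K); for each i ∈ Fin n let A_i = (α_i(a,b)) be a connected infinitesimal matrix on K (irreducible) with strictly positive stationary distribution q_i; fix κ ≥ 0 and for each I ⊆ Fin n a symmetric nonnegative similarity function φ on pairs of I-substrings. Let μ : [0,∞) → (X → ℝ) be a differentiable family of probability measures solving the mutation–recombination equation dμ(x)/dt = ∑_i ∑_{y_i} ( α_i(y_i,x_i)·μ(x_{Λ∖i}, y_i) − α_i(x_i,y_i)·μ(x) ) + κ·∑_{I⊆Λ} ∑_{y_I} ( φ(y_I,x_I)·μ_I(x_I)·μ(x_{Λ∖I}, y_I) − φ(x_I,y_I)·μ_I(y_I)·μ(x) ). Then μ(t) converges to q_Λ as t → ∞, where q_Λ(x) = ∏_i q_i(x_i): for every x ∈ X, μ(t)(x) → q_Λ(x). -/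
/-- The substring of a genome `x : Fin n → K` on a subset `I` of positions. -/
def subword {K : Type*} {n : ℕ} (I : Finset (Fin n)) (x : Fin n → K) : ↥I → K :=
  fun i => x i.1

/-- The marginal distribution of a measure `μ` on the genome space on a subset `I`. -/
def marginal {K : Type*} [Fintype K] [DecidableEq K] {n : ℕ}
    (μ : (Fin n → K) → ℝ) (I : Finset (Fin n)) (a : ↥I → K) : ℝ :=
  ∑ x : Fin n → K, if subword I x = a then μ x else 0

/-- `(x_{Λ∖I}, a)`: the genome obtained from `x` by replacing its restriction to `I`
with `a`. -/
def substGenome {K : Type*} {n : ℕ} (I : Finset (Fin n)) (x : Fin n → K) (a : ↥I → K) :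
    Fin n → K :=
  fun j => if h : j ∈ I then a ⟨j, h⟩ else x j

/-- The right-hand side of the mutation–recombination equation. -/
def mutRecRHS {K : Type*} [Fintype K] [DecidableEq K] {n : ℕ}
    (α : Fin n → K → K → ℝ) (κ : ℝ)
    (φ : (I : Finset (Fin n)) → (↥I → K) → (↥I → K) → ℝ)
    (μ : (Fin n → K) → ℝ) (x : Fin n → K) : ℝ :=
  (∑ i : Fin n, ∑ b : K,
      (α i b (x i) * μ (Function.update x i b) - α i (x i) b * μ x))
  + κ * ∑ I : Finset (Fin n), ∑ a : ↥I → K,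
      (φ I a (subword I x) * marginal μ I (subword I x) * μ (substGenome I x a)
        - φ I (subword I x) a * marginal μ I a * μ x)

set_option linter.unusedSectionVars false

namespace MRE

open Finset

set_option linter.unusedSectionVars false

variable {K : Type*} [Fintype K] [DecidableEq K] {n : ℕ}

@[simp] lemma subword_substGenome (I : Finset (Fin n)) (x : Fin n → K) (a : ↥I → K) :
    subword I (substGenome I x a) = a := by
  funext j
  simp [subword, substGenome, j.2]

@[simp] lemma substGenome_subword (I : Finset (Fin n)) (x : Fin n → K) :
    substGenome I x (subword I x) = x := by
  funext j
  by_cases h : j ∈ I <;> simp [subword, substGenome, h]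

/-- the coordinate splitting equivalence -/
noncomputable def pe (I : Finset (Fin n)) :
    (Fin n → K) ≃ ((↥I → K) × ({j : Fin n // j ∉ I} → K)) :=
  Equiv.piEquivPiSubtypeProd (· ∈ I) (fun _ => K)

lemma subword_pe_symm (I : Finset (Fin n)) (a : ↥I → K) (ξ : {j : Fin n // j ∉ I} → K) :
    subword I ((pe I).symm (a, ξ)) = a := by
  funext j
  simp [subword, pe, Equiv.piEquivPiSubtypeProd, j.2]

lemma substGenome_pe_symm (I : Finset (Fin n)) (η : ↥I → K) (ξ : {j : Fin n // j ∉ I} → K)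
    (a : ↥I → K) :
    substGenome I ((pe I).symm (η, ξ)) a = (pe I).symm (a, ξ) := by
  funext j
  by_cases h : j ∈ I <;> simp [substGenome, pe, Equiv.piEquivPiSubtypeProd, h]

lemma marginal_pe (ν : (Fin n → K) → ℝ) (I : Finset (Fin n)) (η : ↥I → K) :
    marginal ν I η = ∑ ξ : {j : Fin n // j ∉ I} → K, ν ((pe I).symm (η, ξ)) := by
  rw [marginal, ← Equiv.sum_comp (pe I).symm]
  rw [Fintype.sum_prod_type]
  rw [Finset.sum_comm]
  simp [subword_pe_symm]

/-- reindexing equivalence for mutation sums -/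
def mutSwap (i : Fin n) : ((Fin n → K) × K) ≃ ((Fin n → K) × K) where
  toFun p := (Function.update p.1 i p.2, p.1 i)
  invFun p := (Function.update p.1 i p.2, p.1 i)
  left_inv p := by
    cases p with
    | mk x b => simp
  right_inv p := by
    cases p with
    | mk x b => simp

lemma rowsum (α : Fin n → K → K → ℝ)
    (hα_diag : ∀ i : Fin n, ∀ a : K, α i a a = -∑ b ∈ Finset.univ.erase a, α i a b)
    (i : Fin n) (c : K) : ∑ b, α i c b = 0 := by
  rw [← Finset.add_sum_erase _ _ (Finset.mem_univ c), hα_diag]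
  ring

lemma mut_pair (α : Fin n → K → K → ℝ)
    (hα_diag : ∀ i : Fin n, ∀ a : K, α i a a = -∑ b ∈ Finset.univ.erase a, α i a b)
    (ν g : (Fin n → K) → ℝ) (i : Fin n) :
    ∑ x : Fin n → K,
      (∑ b : K, (α i b (x i) * ν (Function.update x i b) - α i (x i) b * ν x)) * g x
    = ∑ y : Fin n → K, ∑ a : K,
        α i (y i) a * ν y * (g (Function.update y i a) - g y) := by
  have h1' : ∑ p : (Fin n → K) × K, α i p.2 (p.1 i) * ν (Function.update p.1 i p.2) * g p.1
      = ∑ p : (Fin n → K) × K, α i (p.1 i) p.2 * ν p.1 * g (Function.update p.1 i p.2) := by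
    apply Fintype.sum_equiv (mutSwap i)
    rintro ⟨x, b⟩
    simp [mutSwap]
  rw [Fintype.sum_prod_type, Fintype.sum_prod_type] at h1'
  have h1 : ∑ x : Fin n → K, ∑ b : K, α i b (x i) * ν (Function.update x i b) * g x
      = ∑ y : Fin n → K, ∑ a : K, α i (y i) a * ν y * g (Function.update y i a) := h1'
  have h2 : ∀ h : (Fin n → K) → ℝ, ∑ x : Fin n → K, ∑ b : K, α i (x i) b * h x = 0 := by
    intro h
    refine Finset.sum_eq_zero fun x _ => ?_
    rw [← Finset.sum_mul, rowsum α hα_diag, zero_mul]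
  have e1 : ∑ x : Fin n → K,
      (∑ b : K, (α i b (x i) * ν (Function.update x i b) - α i (x i) b * ν x)) * g x
      = (∑ x : Fin n → K, ∑ b : K, α i b (x i) * ν (Function.update x i b) * g x)
        - ∑ x : Fin n → K, ∑ b : K, α i (x i) b * (ν x * g x) := by
    rw [← Finset.sum_sub_distrib]
    refine Finset.sum_congr rfl fun x _ => ?_
    rw [Finset.sum_mul, ← Finset.sum_sub_distrib]
    refine Finset.sum_congr rfl fun b _ => ?_
    ring
  have e2 : ∑ y : Fin n → K, ∑ a : K, α i (y i) a * ν y * (g (Function.update y i a) - g y)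
      = (∑ y : Fin n → K, ∑ a : K, α i (y i) a * ν y * g (Function.update y i a))
        - ∑ y : Fin n → K, ∑ a : K, α i (y i) a * (ν y * g y) := by
    rw [← Finset.sum_sub_distrib]
    refine Finset.sum_congr rfl fun y _ => ?_
    rw [← Finset.sum_sub_distrib]
    refine Finset.sum_congr rfl fun a _ => ?_
    ring
  rw [e1, e2, h1, h2]


section recpair

variable (φ : (I : Finset (Fin n)) → (↥I → K) → (↥I → K) → ℝ)
variable (ν g : (Fin n → K) → ℝ) (I : Finset (Fin n))

/-- reindexing involution for recombination sums -/
def recSwap (I : Finset (Fin n)) :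
    (((↥I → K) × ({j : Fin n // j ∉ I} → K)) × ((↥I → K) × ({j : Fin n // j ∉ I} → K)))
    ≃ (((↥I → K) × ({j : Fin n // j ∉ I} → K)) × ((↥I → K) × ({j : Fin n // j ∉ I} → K))) where
  toFun p := ((p.2.1, p.1.2), (p.1.1, p.2.2))
  invFun p := ((p.2.1, p.1.2), (p.1.1, p.2.2))
  left_inv p := rfl
  right_inv p := rfl

lemma gainL :
    ∑ x : Fin n → K,
      (∑ a : ↥I → K,
        φ I a (subword I x) * marginal ν I (subword I x) * ν (substGenome I x a)) * g x
    = ∑ pq : (((↥I → K) × ({j : Fin n // j ∉ I} → K)) × ((↥I → K) × ({j : Fin n // j ∉ I} → K))),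
          φ I pq.2.1 pq.1.1 * ν ((pe I).symm (pq.1.1, pq.2.2)) * ν ((pe I).symm (pq.2.1, pq.1.2))
            * g ((pe I).symm pq.1) := by
  rw [Fintype.sum_prod_type]
  rw [← Equiv.sum_comp (pe I).symm
      (fun x => (∑ a : ↥I → K,
        φ I a (subword I x) * marginal ν I (subword I x) * ν (substGenome I x a)) * g x)]
  refine Finset.sum_congr rfl fun p _ => ?_
  obtain ⟨η, ξ⟩ := p
  rw [Fintype.sum_prod_type]
  simp only [subword_pe_symm, substGenome_pe_symm, marginal_pe]
  rw [Finset.sum_mul]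
  refine Finset.sum_congr rfl fun a _ => ?_
  rw [Finset.mul_sum, Finset.sum_mul, Finset.sum_mul]

lemma gainR :
    ∑ u : Fin n → K, ∑ v : Fin n → K,
      φ I (subword I u) (subword I v) * ν u * ν v * g (substGenome I u (subword I v))
    = ∑ pq : (((↥I → K) × ({j : Fin n // j ∉ I} → K)) × ((↥I → K) × ({j : Fin n // j ∉ I} → K))),
          φ I pq.2.1 pq.1.1 * ν ((pe I).symm (pq.1.1, pq.2.2)) * ν ((pe I).symm (pq.2.1, pq.1.2))
            * g ((pe I).symm pq.1) := by
  have step1 : ∑ u : Fin n → K, ∑ v : Fin n → K,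
      φ I (subword I u) (subword I v) * ν u * ν v * g (substGenome I u (subword I v))
      = ∑ pq : (((↥I → K) × ({j : Fin n // j ∉ I} → K)) × ((↥I → K) × ({j : Fin n // j ∉ I} → K))),
          φ I pq.1.1 pq.2.1 * ν ((pe I).symm pq.1) * ν ((pe I).symm pq.2)
            * g ((pe I).symm (pq.2.1, pq.1.2)) := by
    rw [Fintype.sum_prod_type]
    rw [← Equiv.sum_comp (pe I).symm (fun u => ∑ v : Fin n → K,
      φ I (subword I u) (subword I v) * ν u * ν v * g (substGenome I u (subword I v)))]
    refine Finset.sum_congr rfl fun p _ => ?_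
    obtain ⟨a, ξ⟩ := p
    rw [← Equiv.sum_comp (pe I).symm (fun v =>
      φ I (subword I ((pe I).symm (a, ξ))) (subword I v) * ν ((pe I).symm (a, ξ)) * ν v
        * g (substGenome I ((pe I).symm (a, ξ)) (subword I v)))]
    refine Finset.sum_congr rfl fun r _ => ?_
    obtain ⟨η, ζ⟩ := r
    simp only [subword_pe_symm, substGenome_pe_symm]
  rw [step1]
  apply Fintype.sum_equiv (recSwap I)
  rintro ⟨⟨a, ξ⟩, ⟨η, ζ⟩⟩
  simp only [recSwap, Equiv.coe_fn_mk]
  ring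

lemma lossLR :
    ∑ x : Fin n → K,
      (∑ a : ↥I → K, φ I (subword I x) a * marginal ν I a * ν x) * g x
    = ∑ u : Fin n → K, ∑ v : Fin n → K,
      φ I (subword I u) (subword I v) * ν u * ν v * g u := by
  refine Finset.sum_congr rfl fun x _ => ?_
  rw [Finset.sum_mul]
  have : ∀ a : ↥I → K, φ I (subword I x) a * marginal ν I a * ν x * g x
      = ∑ v : Fin n → K, (if subword I v = a then φ I (subword I x) a * ν x * ν v * g x else 0) := by
    intro a
    rw [marginal, Finset.mul_sum, Finset.sum_mul, Finset.sum_mul]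
    refine Finset.sum_congr rfl fun v _ => ?_
    split <;> ring
  rw [Finset.sum_congr rfl fun a _ => this a, Finset.sum_comm]
  refine Finset.sum_congr rfl fun v _ => ?_
  rw [Finset.sum_ite_eq Finset.univ (subword I v)
    (fun a => φ I (subword I x) a * ν x * ν v * g x)]
  simp

lemma rec_pair :
    ∑ x : Fin n → K,
      (∑ a : ↥I → K,
        (φ I a (subword I x) * marginal ν I (subword I x) * ν (substGenome I x a)
          - φ I (subword I x) a * marginal ν I a * ν x)) * g x
    = ∑ u : Fin n → K, ∑ v : Fin n → K,
        φ I (subword I u) (subword I v) * ν u * ν v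
          * (g (substGenome I u (subword I v)) - g u) := by
  have expand : ∑ x : Fin n → K,
      (∑ a : ↥I → K,
        (φ I a (subword I x) * marginal ν I (subword I x) * ν (substGenome I x a)
          - φ I (subword I x) a * marginal ν I a * ν x)) * g x
      = (∑ x : Fin n → K,
          (∑ a : ↥I → K,
            φ I a (subword I x) * marginal ν I (subword I x) * ν (substGenome I x a)) * g x)
        - ∑ x : Fin n → K,
            (∑ a : ↥I → K, φ I (subword I x) a * marginal ν I a * ν x) * g x := by
    rw [← Finset.sum_sub_distrib]
    refine Finset.sum_congr rfl fun x _ => ?_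
    rw [Finset.sum_sub_distrib, sub_mul]
  have expand2 : ∑ u : Fin n → K, ∑ v : Fin n → K,
      φ I (subword I u) (subword I v) * ν u * ν v
        * (g (substGenome I u (subword I v)) - g u)
      = (∑ u : Fin n → K, ∑ v : Fin n → K,
          φ I (subword I u) (subword I v) * ν u * ν v * g (substGenome I u (subword I v)))
        - ∑ u : Fin n → K, ∑ v : Fin n → K,
            φ I (subword I u) (subword I v) * ν u * ν v * g u := by
    rw [← Finset.sum_sub_distrib]
    refine Finset.sum_congr rfl fun u _ => ?_
    rw [← Finset.sum_sub_distrib]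
    refine Finset.sum_congr rfl fun v _ => ?_
    ring
  rw [expand, expand2, gainL φ ν g I, ← gainR φ ν g I, lossLR φ ν g I]

end recpair


/-- the product measure -/
def qP (q : Fin n → K → ℝ) (x : Fin n → K) : ℝ := ∏ i, q i (x i)

lemma qP_pos (q : Fin n → K → ℝ) (hq_pos : ∀ i a, 0 < q i a) (x : Fin n → K) :
    0 < qP q x :=
  Finset.prod_pos fun i _ => hq_pos i (x i)

lemma sum_qP (q : Fin n → K → ℝ) (hq_sum : ∀ i, ∑ a, q i a = 1) :
    ∑ x : Fin n → K, qP q x = 1 := by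
  have := Finset.prod_univ_sum (fun _ : Fin n => (Finset.univ : Finset K)) (fun i b => q i b)
  rw [Fintype.piFinset_univ] at this
  unfold qP
  rw [← this]
  simp [hq_sum]

lemma qP_update (q : Fin n → K → ℝ) (y : Fin n → K) (i : Fin n) (a : K) :
    qP q (Function.update y i a) * q i (y i) = qP q y * q i a := by
  unfold qP
  have h1 : (fun j => q j (Function.update y i a j)) = Function.update (fun j => q j (y j)) i (q i a) := by
    funext j
    exact Function.apply_update (fun k v => q k v) y i a j
  have h2 : ∏ j, q j (Function.update y i a j) = q i a * ∏ j ∈ Finset.univ.erase i, q j (y j) := by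
    rw [show ∏ j, q j (Function.update y i a j) = ∏ j, Function.update (fun k => q k (y k)) i (q i a) j from by rw [h1]]
    rw [Finset.prod_update_of_mem (Finset.mem_univ i), Finset.sdiff_singleton_eq_erase]
  have h3 : ∏ j, q j (y j) = q i (y i) * ∏ j ∈ Finset.univ.erase i, q j (y j) :=
    (Finset.mul_prod_erase Finset.univ (fun j => q j (y j)) (Finset.mem_univ i)).symm
  rw [h2, h3]
  ring

lemma qP_subst (q : Fin n → K → ℝ) (I : Finset (Fin n)) (u v : Fin n → K) :
    qP q (substGenome I u (subword I v)) * qP q (substGenome I v (subword I u))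
      = qP q u * qP q v := by
  unfold qP
  rw [← Finset.prod_mul_distrib, ← Finset.prod_mul_distrib]
  refine Finset.prod_congr rfl fun j _ => ?_
  by_cases h : j ∈ I <;> simp [substGenome, subword, h, mul_comm]

lemma substGenome_substGenome (I : Finset (Fin n)) (x : Fin n → K) (a b : ↥I → K) :
    substGenome I (substGenome I x a) b = substGenome I x b := by
  funext j
  by_cases h : j ∈ I <;> simp [substGenome, h]

/-- THE master pairing lemma -/
lemma master_pair (α : Fin n → K → K → ℝ)
    (hα_diag : ∀ i : Fin n, ∀ a : K, α i a a = -∑ b ∈ Finset.univ.erase a, α i a b)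
    (κ : ℝ) (φ : (I : Finset (Fin n)) → (↥I → K) → (↥I → K) → ℝ)
    (ν g : (Fin n → K) → ℝ) :
    ∑ x : Fin n → K, mutRecRHS α κ φ ν x * g x
    = (∑ i : Fin n, ∑ y : Fin n → K, ∑ a : K,
        α i (y i) a * ν y * (g (Function.update y i a) - g y))
      + κ * ∑ I : Finset (Fin n), ∑ u : Fin n → K, ∑ v : Fin n → K,
          φ I (subword I u) (subword I v) * ν u * ν v
            * (g (substGenome I u (subword I v)) - g u) := by
  have expand : ∑ x : Fin n → K, mutRecRHS α κ φ ν x * g x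
      = (∑ x : Fin n → K, ∑ i : Fin n,
          (∑ b : K, (α i b (x i) * ν (Function.update x i b) - α i (x i) b * ν x)) * g x)
        + κ * ∑ x : Fin n → K, ∑ I : Finset (Fin n),
            (∑ a : ↥I → K,
              (φ I a (subword I x) * marginal ν I (subword I x) * ν (substGenome I x a)
                - φ I (subword I x) a * marginal ν I a * ν x)) * g x := by
    rw [Finset.mul_sum, ← Finset.sum_add_distrib]
    refine Finset.sum_congr rfl fun x _ => ?_
    simp only [mutRecRHS, add_mul, Finset.sum_mul, mul_assoc]
  rw [expand]
  congr 1
  · rw [Finset.sum_comm]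
    exact Finset.sum_congr rfl fun i _ => mut_pair α hα_diag ν g i
  · congr 1
    rw [Finset.sum_comm]
    exact Finset.sum_congr rfl fun I _ => rec_pair φ ν g I


/-- explicit entropy production functional for the mutation part -/
noncomputable def Gf (α : Fin n → K → K → ℝ) (q : Fin n → K → ℝ) (ν : (Fin n → K) → ℝ) : ℝ :=
  ∑ i : Fin n, ∑ y : Fin n → K, ∑ a : K,
    α i (y i) a *
      (ν (Function.update y i a) * qP q y / qP q (Function.update y i a) - ν y
        - ν y * (Real.log (ν (Function.update y i a)) - Real.log (ν y)
            + Real.log (qP q y) - Real.log (qP q (Function.update y i a))))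

/-- the relative entropy functional -/
noncomputable def Vf (q : Fin n → K → ℝ) (ν : (Fin n → K) → ℝ) : ℝ :=
  ∑ x : Fin n → K, ν x * (Real.log (ν x) - Real.log (qP q x))

lemma mut_zero (α : Fin n → K → K → ℝ)
    (hα_diag : ∀ i : Fin n, ∀ a : K, α i a a = -∑ b ∈ Finset.univ.erase a, α i a b)
    (q : Fin n → K → ℝ) (hq_pos : ∀ i a, 0 < q i a)
    (hq_stat : ∀ i : Fin n, ∀ b : K, ∑ a, q i a * α i a b = 0)
    (ν : (Fin n → K) → ℝ) (i : Fin n) :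
    ∑ y : Fin n → K, ∑ a : K,
      α i (y i) a * (ν (Function.update y i a) * qP q y / qP q (Function.update y i a) - ν y)
    = 0 := by
  have split : ∑ y : Fin n → K, ∑ a : K,
      α i (y i) a * (ν (Function.update y i a) * qP q y / qP q (Function.update y i a) - ν y)
      = (∑ y : Fin n → K, ∑ a : K,
          α i (y i) a * ν (Function.update y i a) * (q i (y i) / q i a))
        - ∑ y : Fin n → K, ∑ a : K, α i (y i) a * ν y := by
    rw [← Finset.sum_sub_distrib]
    refine Finset.sum_congr rfl fun y _ => ?_
    rw [← Finset.sum_sub_distrib]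
    refine Finset.sum_congr rfl fun a _ => ?_
    have hdiv : qP q y / qP q (Function.update y i a) = q i (y i) / q i a := by
      rw [div_eq_div_iff (ne_of_gt (qP_pos q hq_pos _)) (ne_of_gt (hq_pos i a))]
      have := qP_update q y i a
      linarith [qP_update q y i a]
    rw [mul_sub, mul_div_assoc, hdiv]
    ring
  rw [split]
  have h2 : ∑ y : Fin n → K, ∑ a : K, α i (y i) a * ν y = 0 := by
    refine Finset.sum_eq_zero fun y _ => ?_
    rw [← Finset.sum_mul, rowsum α hα_diag, zero_mul]
  have h1' : ∑ p : (Fin n → K) × K,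
      α i (p.1 i) p.2 * ν (Function.update p.1 i p.2) * (q i (p.1 i) / q i p.2)
      = ∑ p : (Fin n → K) × K, α i p.2 (p.1 i) * ν p.1 * (q i p.2 / q i (p.1 i)) := by
    apply Fintype.sum_equiv (mutSwap i)
    rintro ⟨y, a⟩
    simp [mutSwap]
  rw [Fintype.sum_prod_type, Fintype.sum_prod_type] at h1'
  have h1 : ∑ y : Fin n → K, ∑ a : K,
      α i (y i) a * ν (Function.update y i a) * (q i (y i) / q i a) = 0 := by
    rw [h1']
    refine Finset.sum_eq_zero fun x _ => ?_
    have : ∑ b : K, α i b (x i) * ν x * (q i b / q i (x i))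
        = (ν x / q i (x i)) * ∑ b : K, q i b * α i b (x i) := by
      rw [Finset.mul_sum]
      refine Finset.sum_congr rfl fun b _ => ?_
      field_simp
    rw [this, hq_stat i (x i), mul_zero]
  rw [h1, h2, sub_zero]

lemma Dmut_eq (α : Fin n → K → K → ℝ)
    (hα_diag : ∀ i : Fin n, ∀ a : K, α i a a = -∑ b ∈ Finset.univ.erase a, α i a b)
    (q : Fin n → K → ℝ) (hq_pos : ∀ i a, 0 < q i a)
    (hq_stat : ∀ i : Fin n, ∀ b : K, ∑ a, q i a * α i a b = 0)
    (ν : (Fin n → K) → ℝ) :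
    ∑ i : Fin n, ∑ y : Fin n → K, ∑ a : K,
      α i (y i) a * ν y *
        ((Real.log (ν (Function.update y i a)) - Real.log (qP q (Function.update y i a)))
          - (Real.log (ν y) - Real.log (qP q y)))
    = - Gf α q ν := by
  rw [Gf, ← Finset.sum_neg_distrib]
  refine Finset.sum_congr rfl fun i _ => ?_
  have : ∀ y : Fin n → K, ∀ a : K,
      α i (y i) a * ν y *
        ((Real.log (ν (Function.update y i a)) - Real.log (qP q (Function.update y i a)))
          - (Real.log (ν y) - Real.log (qP q y)))
      = α i (y i) a * (ν (Function.update y i a) * qP q y / qP q (Function.update y i a) - ν y)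
        - α i (y i) a *
          (ν (Function.update y i a) * qP q y / qP q (Function.update y i a) - ν y
            - ν y * (Real.log (ν (Function.update y i a)) - Real.log (ν y)
                + Real.log (qP q y) - Real.log (qP q (Function.update y i a)))) := by
    intro y a
    ring
  calc ∑ y : Fin n → K, ∑ a : K,
      α i (y i) a * ν y *
        ((Real.log (ν (Function.update y i a)) - Real.log (qP q (Function.update y i a)))
          - (Real.log (ν y) - Real.log (qP q y)))
      = (∑ y : Fin n → K, ∑ a : K,
          α i (y i) a * (ν (Function.update y i a) * qP q y / qP q (Function.update y i a) - ν y))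
        - ∑ y : Fin n → K, ∑ a : K,
          α i (y i) a *
            (ν (Function.update y i a) * qP q y / qP q (Function.update y i a) - ν y
              - ν y * (Real.log (ν (Function.update y i a)) - Real.log (ν y)
                  + Real.log (qP q y) - Real.log (qP q (Function.update y i a)))) := by
        rw [← Finset.sum_sub_distrib]
        refine Finset.sum_congr rfl fun y _ => ?_
        rw [← Finset.sum_sub_distrib]
        exact Finset.sum_congr rfl fun a _ => this y a
    _ = - ∑ y : Fin n → K, ∑ a : K,
          α i (y i) a *
            (ν (Function.update y i a) * qP q y / qP q (Function.update y i a) - ν y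
              - ν y * (Real.log (ν (Function.update y i a)) - Real.log (ν y)
                  + Real.log (qP q y) - Real.log (qP q (Function.update y i a)))) := by
        rw [mut_zero α hα_diag q hq_pos hq_stat ν i]
        ring


lemma psi_nonneg {z : ℝ} (hz : 0 < z) : 0 ≤ z - 1 - Real.log z := by
  have := Real.log_le_sub_one_of_pos hz
  linarith

lemma psi_eq_zero {z : ℝ} (hz : 0 < z) (h : z - 1 - Real.log z = 0) : z = 1 := by
  by_contra hne
  have := Real.log_lt_sub_one_of_pos hz hne
  linarith

lemma Eshape (w w' p p' : ℝ) (hw : 0 < w) (hw' : 0 < w') (hp : 0 < p) (hp' : 0 < p') :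
    w' * p / p' - w - w * (Real.log w' - Real.log w + Real.log p - Real.log p')
    = w * (w' * p / (p' * w) - 1 - Real.log (w' * p / (p' * w))) := by
  rw [Real.log_div (by positivity) (by positivity), Real.log_mul hw'.ne' hp.ne',
    Real.log_mul hp'.ne' hw.ne']
  field_simp
  ring

lemma Gf_term_nonneg (α : Fin n → K → K → ℝ)
    (hα_off : ∀ i : Fin n, ∀ a b : K, a ≠ b → 0 ≤ α i a b)
    (q : Fin n → K → ℝ) (hq_pos : ∀ i a, 0 < q i a)
    (ν : (Fin n → K) → ℝ) (hν : ∀ x, 0 < ν x) (i : Fin n) (y : Fin n → K) (a : K) :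
    0 ≤ α i (y i) a *
      (ν (Function.update y i a) * qP q y / qP q (Function.update y i a) - ν y
        - ν y * (Real.log (ν (Function.update y i a)) - Real.log (ν y)
            + Real.log (qP q y) - Real.log (qP q (Function.update y i a)))) := by
  by_cases ha : a = y i
  · subst ha
    rw [Function.update_eq_self]
    have : ν y * qP q y / qP q y - ν y - ν y * (Real.log (ν y) - Real.log (ν y)
        + Real.log (qP q y) - Real.log (qP q y)) = 0 := by
      rw [mul_div_assoc, div_self (ne_of_gt (qP_pos q hq_pos y))]
      ring
    rw [this, mul_zero]
  · have hα := hα_off i (y i) a (fun h => ha h.symm)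
    refine mul_nonneg hα ?_
    rw [Eshape _ _ _ _ (hν y) (hν _) (qP_pos q hq_pos y) (qP_pos q hq_pos _)]
    refine mul_nonneg (hν y).le (psi_nonneg ?_)
    exact div_pos (mul_pos (hν _) (qP_pos q hq_pos y)) (mul_pos (qP_pos q hq_pos _) (hν y))

lemma Gf_nonneg (α : Fin n → K → K → ℝ)
    (hα_off : ∀ i : Fin n, ∀ a b : K, a ≠ b → 0 ≤ α i a b)
    (q : Fin n → K → ℝ) (hq_pos : ∀ i a, 0 < q i a)
    (ν : (Fin n → K) → ℝ) (hν : ∀ x, 0 < ν x) : 0 ≤ Gf α q ν := by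
  refine Finset.sum_nonneg fun i _ => Finset.sum_nonneg fun y _ => Finset.sum_nonneg fun a _ =>
    Gf_term_nonneg α hα_off q hq_pos ν hν i y a

/-- one positive-rate mutation step between genomes -/
def GStep (α : Fin n → K → K → ℝ) (y x : Fin n → K) : Prop :=
  ∃ i c, 0 < α i (y i) c ∧ x = Function.update y i c

lemma site_reach (α : Fin n → K → K → ℝ) (i : Fin n) :
    ∀ u v : K, Relation.ReflTransGen (fun a b => 0 < α i a b) u v →
      ∀ g : Fin n → K, g i = u →
        Relation.ReflTransGen (GStep α) g (Function.update g i v) := by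
  intro u v h
  induction h with
  | refl =>
    intro g hg
    rw [← hg, Function.update_eq_self]
  | @tail b c hab hbc ih =>
    intro g hg
    refine Relation.ReflTransGen.tail (ih g hg) ?_
    refine ⟨i, c, ?_, ?_⟩
    · rwa [Function.update_self]
    · rw [Function.update_idem]

lemma reach (α : Fin n → K → K → ℝ)
    (hα_conn : ∀ i : Fin n, ∀ a b : K,
      Relation.ReflTransGen (fun u v => 0 < α i u v) a b)
    (y x : Fin n → K) : Relation.ReflTransGen (GStep α) y x := by
  suffices h : ∀ S : Finset (Fin n), ∀ y x : Fin n → K, (∀ j, j ∉ S → y j = x j) →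
      Relation.ReflTransGen (GStep α) y x by
    exact h Finset.univ y x (fun j hj => absurd (Finset.mem_univ j) hj)
  intro S
  induction S using Finset.induction_on with
  | empty =>
    intro y x h
    have : y = x := funext fun j => h j (Finset.notMem_empty j)
    rw [this]
  | @insert i S hi ih =>
    intro y x h
    have h1 : Relation.ReflTransGen (GStep α) y (Function.update y i (x i)) :=
      site_reach α i (y i) (x i) (hα_conn i (y i) (x i)) y rfl
    refine h1.trans (ih _ x fun j hj => ?_)
    by_cases hji : j = i
    · subst hji
      rw [Function.update_self]
    · rw [Function.update_of_ne hji]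
      exact h j (by simp [hji, hj])

lemma Gf_eq_zero (α : Fin n → K → K → ℝ)
    (hα_off : ∀ i : Fin n, ∀ a b : K, a ≠ b → 0 ≤ α i a b)
    (hα_conn : ∀ i : Fin n, ∀ a b : K,
      Relation.ReflTransGen (fun u v => 0 < α i u v) a b)
    (q : Fin n → K → ℝ) (hq_pos : ∀ i a, 0 < q i a) (hq_sum : ∀ i, ∑ a, q i a = 1)
    (ν : (Fin n → K) → ℝ) (hν : ∀ x, 0 < ν x) (hsum : ∑ x, ν x = 1)
    (hG : Gf α q ν = 0) : ∀ x, ν x = qP q x := by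
  -- each term vanishes
  have hterm : ∀ i : Fin n, ∀ y : Fin n → K, ∀ a : K,
      α i (y i) a *
      (ν (Function.update y i a) * qP q y / qP q (Function.update y i a) - ν y
        - ν y * (Real.log (ν (Function.update y i a)) - Real.log (ν y)
            + Real.log (qP q y) - Real.log (qP q (Function.update y i a)))) = 0 := by
    have h1 := (Finset.sum_eq_zero_iff_of_nonneg (fun i _ => Finset.sum_nonneg fun y _ =>
      Finset.sum_nonneg fun a _ => Gf_term_nonneg α hα_off q hq_pos ν hν i y a)).mp hG
    intro i y a
    have h2 := (Finset.sum_eq_zero_iff_of_nonneg (fun y _ => Finset.sum_nonneg fun a _ =>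
      Gf_term_nonneg α hα_off q hq_pos ν hν i y a)).mp (h1 i (Finset.mem_univ i))
    have h3 := (Finset.sum_eq_zero_iff_of_nonneg (fun a _ =>
      Gf_term_nonneg α hα_off q hq_pos ν hν i y a)).mp (h2 y (Finset.mem_univ y))
    exact h3 a (Finset.mem_univ a)
  -- ratio is invariant along positive steps
  have hstep : ∀ y x : Fin n → K, GStep α y x → ν x * qP q y = qP q x * ν y := by
    rintro y x ⟨i, c, hc, rfl⟩
    have h := hterm i y c
    rw [Eshape _ _ _ _ (hν y) (hν _) (qP_pos q hq_pos y) (qP_pos q hq_pos _)] at h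
    have hz : ν (Function.update y i c) * qP q y / (qP q (Function.update y i c) * ν y) = 1 := by
      have h' := mul_eq_zero.mp h
      rcases h' with h' | h'
      · exact absurd h' (ne_of_gt hc)
      · have h'' := mul_eq_zero.mp h'
        rcases h'' with h'' | h''
        · exact absurd h'' (ne_of_gt (hν y))
        · exact psi_eq_zero (div_pos (mul_pos (hν _) (qP_pos q hq_pos y))
            (mul_pos (qP_pos q hq_pos _) (hν y))) h''
    have := (div_eq_one_iff_eq (ne_of_gt (mul_pos (qP_pos q hq_pos _) (hν y)))).mp hz
    linarith
  have hrel : ∀ y x : Fin n → K, Relation.ReflTransGen (GStep α) y x →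
      ν x * qP q y = qP q x * ν y := by
    intro y x h
    induction h with
    | refl => ring
    | @tail b c hab hbc ih =>
      have h2 := hstep b c hbc
      have hb := qP_pos q hq_pos b
      have hc' := qP_pos q hq_pos c
      have hy := qP_pos q hq_pos y
      nlinarith [hν b, hν c, hν y]
  intro x
  have hx : ∀ y : Fin n → K, ν y * qP q x = qP q y * ν x := fun y =>
    hrel x y (reach α hα_conn x y)
  have hsum' : (1 : ℝ) * qP q x = 1 * ν x := by
    calc (1 : ℝ) * qP q x = (∑ y : Fin n → K, ν y) * qP q x := by rw [hsum]
    _ = ∑ y : Fin n → K, ν y * qP q x := by rw [Finset.sum_mul]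
    _ = ∑ y : Fin n → K, qP q y * ν x := Finset.sum_congr rfl fun y _ => hx y
    _ = (∑ y : Fin n → K, qP q y) * ν x := by rw [Finset.sum_mul]
    _ = 1 * ν x := by rw [sum_qP q hq_sum]
  simpa using hsum'.symm


/-- involution exchanging the `I`-blocks of a pair of genomes -/
def recombJ (I : Finset (Fin n)) :
    ((Fin n → K) × (Fin n → K)) ≃ ((Fin n → K) × (Fin n → K)) where
  toFun p := (substGenome I p.1 (subword I p.2), substGenome I p.2 (subword I p.1))
  invFun p := (substGenome I p.1 (subword I p.2), substGenome I p.2 (subword I p.1))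
  left_inv p := by
    cases p with
    | mk u v =>
      simp only [subword_substGenome, substGenome_substGenome, substGenome_subword]
  right_inv p := by
    cases p with
    | mk u v =>
      simp only [subword_substGenome, substGenome_substGenome, substGenome_subword]

lemma rec_zero (φ : (I : Finset (Fin n)) → (↥I → K) → (↥I → K) → ℝ)
    (hφ_symm : ∀ I a b, φ I a b = φ I b a)
    (ν : (Fin n → K) → ℝ) (I : Finset (Fin n)) :
    ∑ u : Fin n → K, ∑ v : Fin n → K, φ I (subword I u) (subword I v) *
      (ν (substGenome I u (subword I v)) * ν (substGenome I v (subword I u)) - ν u * ν v)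
    = 0 := by
  have split : ∑ u : Fin n → K, ∑ v : Fin n → K, φ I (subword I u) (subword I v) *
      (ν (substGenome I u (subword I v)) * ν (substGenome I v (subword I u)) - ν u * ν v)
      = (∑ u : Fin n → K, ∑ v : Fin n → K, φ I (subword I u) (subword I v) *
          (ν (substGenome I u (subword I v)) * ν (substGenome I v (subword I u))))
        - ∑ u : Fin n → K, ∑ v : Fin n → K, φ I (subword I u) (subword I v) * (ν u * ν v) := by
    rw [← Finset.sum_sub_distrib]
    refine Finset.sum_congr rfl fun u _ => ?_
    rw [← Finset.sum_sub_distrib]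
    refine Finset.sum_congr rfl fun v _ => ?_
    ring
  rw [split]
  have h1' : ∑ p : (Fin n → K) × (Fin n → K), φ I (subword I p.1) (subword I p.2) *
      (ν (substGenome I p.1 (subword I p.2)) * ν (substGenome I p.2 (subword I p.1)))
      = ∑ p : (Fin n → K) × (Fin n → K), φ I (subword I p.1) (subword I p.2) * (ν p.1 * ν p.2) := by
    apply Fintype.sum_equiv (recombJ I)
    rintro ⟨u, v⟩
    simp only [recombJ, Equiv.coe_fn_mk, subword_substGenome]
    rw [hφ_symm]
  rw [Fintype.sum_prod_type, Fintype.sum_prod_type] at h1'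
  rw [h1', sub_self]

lemma rec_term_bound (c wu wv wu' wv' pu pv pu' pv' : ℝ) (hc : 0 ≤ c)
    (hwu : 0 < wu) (hwv : 0 < wv) (hwu' : 0 < wu') (hwv' : 0 < wv')
    (hpu : 0 < pu) (hpv : 0 < pv) (hpu' : 0 < pu') (hpv' : 0 < pv')
    (hp : pu' * pv' = pu * pv) :
    c * wu * wv * ((Real.log wu' - Real.log pu') - (Real.log wu - Real.log pu))
    + c * wu * wv * ((Real.log wv' - Real.log pv') - (Real.log wv - Real.log pv))
    ≤ c * (wu' * wv' - wu * wv) := by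
  have hplog : Real.log pu' + Real.log pv' = Real.log pu + Real.log pv := by
    rw [← Real.log_mul hpu'.ne' hpv'.ne', ← Real.log_mul hpu.ne' hpv.ne', hp]
  have hlog : Real.log wu' + Real.log wv' - Real.log wu - Real.log wv
      = Real.log ((wu' * wv') / (wu * wv)) := by
    rw [Real.log_div (by positivity) (by positivity), Real.log_mul hwu'.ne' hwv'.ne',
      Real.log_mul hwu.ne' hwv.ne']
    ring
  have hb : Real.log ((wu' * wv') / (wu * wv)) ≤ (wu' * wv') / (wu * wv) - 1 :=
    Real.log_le_sub_one_of_pos (by positivity)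
  have e1 : c * wu * wv * ((Real.log wu' - Real.log pu') - (Real.log wu - Real.log pu))
      + c * wu * wv * ((Real.log wv' - Real.log pv') - (Real.log wv - Real.log pv))
      = c * wu * wv * Real.log ((wu' * wv') / (wu * wv)) := by
    rw [← hlog]
    linear_combination (-(c * wu * wv)) * hplog
  rw [e1]
  have e2 : c * wu * wv * ((wu' * wv') / (wu * wv) - 1) = c * (wu' * wv' - wu * wv) := by
    field_simp
  calc c * wu * wv * Real.log ((wu' * wv') / (wu * wv))
      ≤ c * wu * wv * ((wu' * wv') / (wu * wv) - 1) := by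
        apply mul_le_mul_of_nonneg_left hb
        positivity
    _ = c * (wu' * wv' - wu * wv) := e2

lemma rec_dissip (φ : (I : Finset (Fin n)) → (↥I → K) → (↥I → K) → ℝ)
    (hφ_symm : ∀ I a b, φ I a b = φ I b a)
    (hφ_nonneg : ∀ I a b, 0 ≤ φ I a b)
    (q : Fin n → K → ℝ) (hq_pos : ∀ i a, 0 < q i a)
    (ν : (Fin n → K) → ℝ) (hν : ∀ x, 0 < ν x) (I : Finset (Fin n)) :
    ∑ u : Fin n → K, ∑ v : Fin n → K, φ I (subword I u) (subword I v) * ν u * ν v *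
      ((Real.log (ν (substGenome I u (subword I v)))
          - Real.log (qP q (substGenome I u (subword I v))))
        - (Real.log (ν u) - Real.log (qP q u))) ≤ 0 := by
  set D := ∑ u : Fin n → K, ∑ v : Fin n → K, φ I (subword I u) (subword I v) * ν u * ν v *
      ((Real.log (ν (substGenome I u (subword I v)))
          - Real.log (qP q (substGenome I u (subword I v))))
        - (Real.log (ν u) - Real.log (qP q u))) with hD
  have hswap : D = ∑ u : Fin n → K, ∑ v : Fin n → K, φ I (subword I u) (subword I v) * ν u * ν v *
      ((Real.log (ν (substGenome I v (subword I u)))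
          - Real.log (qP q (substGenome I v (subword I u))))
        - (Real.log (ν v) - Real.log (qP q v))) := by
    rw [hD, Finset.sum_comm]
    refine Finset.sum_congr rfl fun u _ => Finset.sum_congr rfl fun v _ => ?_
    rw [hφ_symm]
    ring
  have key : D + D ≤ 0 := by
    have hb : D + D ≤ ∑ u : Fin n → K, ∑ v : Fin n → K, φ I (subword I u) (subword I v) *
        (ν (substGenome I u (subword I v)) * ν (substGenome I v (subword I u)) - ν u * ν v) := by
      nth_rewrite 2 [hswap]
      rw [hD, ← Finset.sum_add_distrib]
      refine Finset.sum_le_sum fun u _ => ?_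
      rw [← Finset.sum_add_distrib]
      refine Finset.sum_le_sum fun v _ => ?_
      exact rec_term_bound _ _ _ _ _ _ _ _ _ (hφ_nonneg I _ _) (hν u) (hν v) (hν _) (hν _)
        (qP_pos q hq_pos u) (qP_pos q hq_pos v) (qP_pos q hq_pos _) (qP_pos q hq_pos _)
        (qP_subst q I u v)
    rw [rec_zero φ hφ_symm ν I] at hb
    exact hb
  linarith


/-- the main dissipation inequality: pairing the RHS against `log ρ + 1` -/
lemma main_ineq (α : Fin n → K → K → ℝ)
    (hα_off : ∀ i : Fin n, ∀ a b : K, a ≠ b → 0 ≤ α i a b)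
    (hα_diag : ∀ i : Fin n, ∀ a : K, α i a a = -∑ b ∈ Finset.univ.erase a, α i a b)
    (q : Fin n → K → ℝ) (hq_pos : ∀ i a, 0 < q i a)
    (hq_stat : ∀ i : Fin n, ∀ b : K, ∑ a, q i a * α i a b = 0)
    (κ : ℝ) (hκ : 0 ≤ κ)
    (φ : (I : Finset (Fin n)) → (↥I → K) → (↥I → K) → ℝ)
    (hφ_symm : ∀ I a b, φ I a b = φ I b a)
    (hφ_nonneg : ∀ I a b, 0 ≤ φ I a b)
    (ν : (Fin n → K) → ℝ) (hν : ∀ x, 0 < ν x) :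
    ∑ x : Fin n → K, mutRecRHS α κ φ ν x *
      (Real.log (ν x) - Real.log (qP q x) + 1) ≤ - Gf α q ν := by
  rw [master_pair α hα_diag κ φ ν (fun x => Real.log (ν x) - Real.log (qP q x) + 1)]
  have hmut : ∑ i : Fin n, ∑ y : Fin n → K, ∑ a : K,
      α i (y i) a * ν y *
        ((Real.log (ν (Function.update y i a)) - Real.log (qP q (Function.update y i a)) + 1)
          - (Real.log (ν y) - Real.log (qP q y) + 1))
      = - Gf α q ν := by
    rw [← Dmut_eq α hα_diag q hq_pos hq_stat ν]
    refine Finset.sum_congr rfl fun i _ => Finset.sum_congr rfl fun y _ =>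
      Finset.sum_congr rfl fun a _ => ?_
    ring
  have hrec : ∑ I : Finset (Fin n), ∑ u : Fin n → K, ∑ v : Fin n → K,
      φ I (subword I u) (subword I v) * ν u * ν v *
        ((Real.log (ν (substGenome I u (subword I v)))
            - Real.log (qP q (substGenome I u (subword I v))) + 1)
          - (Real.log (ν u) - Real.log (qP q u) + 1)) ≤ 0 := by
    refine Finset.sum_nonpos fun I _ => ?_
    have := rec_dissip φ hφ_symm hφ_nonneg q hq_pos ν hν I
    calc ∑ u : Fin n → K, ∑ v : Fin n → K,
        φ I (subword I u) (subword I v) * ν u * ν v *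
          ((Real.log (ν (substGenome I u (subword I v)))
              - Real.log (qP q (substGenome I u (subword I v))) + 1)
            - (Real.log (ν u) - Real.log (qP q u) + 1))
        = ∑ u : Fin n → K, ∑ v : Fin n → K,
          φ I (subword I u) (subword I v) * ν u * ν v *
            ((Real.log (ν (substGenome I u (subword I v)))
                - Real.log (qP q (substGenome I u (subword I v))))
              - (Real.log (ν u) - Real.log (qP q u))) := by
          refine Finset.sum_congr rfl fun u _ => Finset.sum_congr rfl fun v _ => ?_
          ring
      _ ≤ 0 := this
  rw [hmut]
  nlinarith [mul_nonpos_of_nonneg_of_nonpos hκ hrec]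

lemma marginal_nonneg (ν : (Fin n → K) → ℝ) (hν : ∀ x, 0 ≤ ν x)
    (I : Finset (Fin n)) (a : ↥I → K) : 0 ≤ marginal ν I a := by
  refine Finset.sum_nonneg fun x _ => ?_
  split
  · exact hν x
  · exact le_refl 0
  

section lower
variable (α : Fin n → K → K → ℝ) (κ : ℝ)
  (φ : (I : Finset (Fin n)) → (↥I → K) → (↥I → K) → ℝ)

/-- total mutation intensity bound -/
def Abound (α : Fin n → K → K → ℝ) : ℝ := ∑ i : Fin n, ∑ a : K, ∑ b ∈ Finset.univ.erase a, α i a b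

/-- total recombination intensity bound -/
def Bbound (φ : (I : Finset (Fin n)) → (↥I → K) → (↥I → K) → ℝ) : ℝ :=
  ∑ I : Finset (Fin n), ∑ aa : ↥I → K, ∑ bb : ↥I → K, φ I aa bb

def Cbound (α : Fin n → K → K → ℝ) (κ : ℝ)
    (φ : (I : Finset (Fin n)) → (↥I → K) → (↥I → K) → ℝ) : ℝ :=
  Abound α + κ * Bbound φ

lemma mut_lower_gain
    (hα_off : ∀ i : Fin n, ∀ a b : K, a ≠ b → 0 ≤ α i a b)
    (hα_diag : ∀ i : Fin n, ∀ a : K, α i a a = -∑ b ∈ Finset.univ.erase a, α i a b)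
    (ν : (Fin n → K) → ℝ) (hν : ∀ x, 0 ≤ ν x) (x : Fin n → K)
    (E : ℝ) (hE : E = 0 ∨ ∃ i₀ : Fin n, ∃ b₀ : K, b₀ ≠ x i₀
      ∧ E = α i₀ b₀ (x i₀) * ν (Function.update x i₀ b₀)) :
    -Abound α * ν x + E ≤
      ∑ i : Fin n, ∑ b : K, (α i b (x i) * ν (Function.update x i b) - α i (x i) b * ν x) := by
  have mp_eq : ∑ i : Fin n, ∑ b : K,
      (α i b (x i) * ν (Function.update x i b) - α i (x i) b * ν x)
      = ∑ i : Fin n, ∑ b : K, α i b (x i) * ν (Function.update x i b) := by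
    refine Finset.sum_congr rfl fun i _ => ?_
    rw [Finset.sum_sub_distrib]
    have : ∑ b : K, α i (x i) b * ν x = 0 := by
      rw [← Finset.sum_mul, rowsum α hα_diag, zero_mul]
    rw [this, sub_zero]
  rw [mp_eq]
  -- per-site lower bounds
  have hAi : ∀ i : Fin n, ∑ b ∈ Finset.univ.erase (x i), α i (x i) b
      ≤ ∑ a : K, ∑ b ∈ Finset.univ.erase a, α i a b := by
    intro i
    refine Finset.single_le_sum (f := fun a => ∑ b ∈ Finset.univ.erase a, α i a b)
      (fun a _ => Finset.sum_nonneg fun b hb => hα_off i a b ?_) (Finset.mem_univ (x i))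
    exact fun h => (Finset.mem_erase.mp hb).1 h.symm
  have hsite : ∀ i : Fin n, ∀ Ei : ℝ, (Ei = 0 ∨ ∃ b₀ : K, b₀ ≠ x i
      ∧ Ei = α i b₀ (x i) * ν (Function.update x i b₀)) →
      -(∑ a : K, ∑ b ∈ Finset.univ.erase a, α i a b) * ν x + Ei
        ≤ ∑ b : K, α i b (x i) * ν (Function.update x i b) := by
    intro i Ei hEi
    have hdecomp : ∑ b : K, α i b (x i) * ν (Function.update x i b)
        = α i (x i) (x i) * ν x
          + ∑ b ∈ Finset.univ.erase (x i), α i b (x i) * ν (Function.update x i b) := by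
      rw [← Finset.add_sum_erase _ _ (Finset.mem_univ (x i)), Function.update_eq_self]
    rw [hdecomp, hα_diag]
    have h1 : -(∑ a : K, ∑ b ∈ Finset.univ.erase a, α i a b) * ν x
        ≤ -(∑ b ∈ Finset.univ.erase (x i), α i (x i) b) * ν x := by
      apply mul_le_mul_of_nonneg_right _ (hν x)
      simp only [neg_le_neg_iff]
      exact hAi i
    have h2 : Ei ≤ ∑ b ∈ Finset.univ.erase (x i), α i b (x i) * ν (Function.update x i b) := by
      rcases hEi with rfl | ⟨b₀, hb₀, rfl⟩
      · exact Finset.sum_nonneg fun b hb => mul_nonneg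
          (hα_off i b (x i) fun h => (Finset.mem_erase.mp hb).1 h) (hν _)
      · refine Finset.single_le_sum (f := fun b => α i b (x i) * ν (Function.update x i b))
          (fun b hb => mul_nonneg (hα_off i b (x i) fun h => (Finset.mem_erase.mp hb).1 h) (hν _))
          (Finset.mem_erase.mpr ⟨hb₀, Finset.mem_univ b₀⟩)
    linarith
  rcases hE with rfl | ⟨i₀, b₀, hb₀, rfl⟩
  · calc -Abound α * ν x + 0 = ∑ i : Fin n,
        (-(∑ a : K, ∑ b ∈ Finset.univ.erase a, α i a b) * ν x + 0) := by
          rw [Abound, ← Finset.sum_neg_distrib, Finset.sum_mul]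
          simp
      _ ≤ _ := Finset.sum_le_sum fun i _ => hsite i 0 (Or.inl rfl)
  · have split : -Abound α * ν x + α i₀ b₀ (x i₀) * ν (Function.update x i₀ b₀)
        = ∑ i : Fin n, (-(∑ a : K, ∑ b ∈ Finset.univ.erase a, α i a b) * ν x
            + (if i = i₀ then α i₀ b₀ (x i₀) * ν (Function.update x i₀ b₀) else 0)) := by
      rw [Finset.sum_add_distrib, Finset.sum_ite_eq' Finset.univ i₀]
      simp only [Finset.mem_univ, if_true]
      rw [Abound, ← Finset.sum_neg_distrib, Finset.sum_mul]
    rw [split]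
    refine Finset.sum_le_sum fun i _ => ?_
    by_cases hi : i = i₀
    · subst hi
      exact hsite i _ (Or.inr ⟨b₀, hb₀, by simp⟩)
    · simp only [hi, if_false]
      exact hsite i 0 (Or.inl rfl)

lemma marginal_le_one (ν : (Fin n → K) → ℝ) (hν : ∀ x, 0 ≤ ν x)
    (hsum : ∑ x, ν x = 1) (I : Finset (Fin n)) (a : ↥I → K) : marginal ν I a ≤ 1 := by
  rw [marginal, ← hsum]
  refine Finset.sum_le_sum fun x _ => ?_
  split
  · exact le_refl _
  · exact hν x

lemma rec_lower
    (hφ_nonneg : ∀ I a b, 0 ≤ φ I a b)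
    (ν : (Fin n → K) → ℝ) (hν : ∀ x, 0 ≤ ν x) (hsum : ∑ x, ν x = 1) (x : Fin n → K) :
    -Bbound φ * ν x ≤
      ∑ I : Finset (Fin n), ∑ a : ↥I → K,
        (φ I a (subword I x) * marginal ν I (subword I x) * ν (substGenome I x a)
          - φ I (subword I x) a * marginal ν I a * ν x) := by
  have hI : ∀ I : Finset (Fin n),
      -(∑ aa : ↥I → K, ∑ bb : ↥I → K, φ I aa bb) * ν x ≤
      ∑ a : ↥I → K,
        (φ I a (subword I x) * marginal ν I (subword I x) * ν (substGenome I x a)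
          - φ I (subword I x) a * marginal ν I a * ν x) := by
    intro I
    have hterm : ∀ a : ↥I → K,
        -(φ I (subword I x) a) * ν x ≤
        φ I a (subword I x) * marginal ν I (subword I x) * ν (substGenome I x a)
          - φ I (subword I x) a * marginal ν I a * ν x := by
      intro a
      have hg : 0 ≤ φ I a (subword I x) * marginal ν I (subword I x) * ν (substGenome I x a) :=
        mul_nonneg (mul_nonneg (hφ_nonneg _ _ _) (marginal_nonneg ν hν I _)) (hν _)
      have hl : φ I (subword I x) a * marginal ν I a * ν x ≤ φ I (subword I x) a * ν x := by
        have h := marginal_le_one ν hν hsum I a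
        nlinarith [mul_nonneg (mul_nonneg (hφ_nonneg I (subword I x) a) (hν x))
          (sub_nonneg.mpr h)]
      linarith
    calc -(∑ aa : ↥I → K, ∑ bb : ↥I → K, φ I aa bb) * ν x
        ≤ -(∑ bb : ↥I → K, φ I (subword I x) bb) * ν x := by
          apply mul_le_mul_of_nonneg_right _ (hν x)
          simp only [neg_le_neg_iff]
          exact Finset.single_le_sum (f := fun aa => ∑ bb : ↥I → K, φ I aa bb)
            (fun aa _ => Finset.sum_nonneg fun bb _ => hφ_nonneg I aa bb)
            (Finset.mem_univ (subword I x))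
      _ = ∑ a : ↥I → K, -(φ I (subword I x) a) * ν x := by
          rw [← Finset.sum_neg_distrib, Finset.sum_mul]
      _ ≤ _ := Finset.sum_le_sum fun a _ => hterm a
  calc -Bbound φ * ν x = ∑ I : Finset (Fin n),
      -(∑ aa : ↥I → K, ∑ bb : ↥I → K, φ I aa bb) * ν x := by
        rw [Bbound, ← Finset.sum_neg_distrib, Finset.sum_mul]
    _ ≤ _ := Finset.sum_le_sum fun I _ => hI I

lemma F_lower_gain
    (hα_off : ∀ i : Fin n, ∀ a b : K, a ≠ b → 0 ≤ α i a b)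
    (hα_diag : ∀ i : Fin n, ∀ a : K, α i a a = -∑ b ∈ Finset.univ.erase a, α i a b)
    (hφ_nonneg : ∀ I a b, 0 ≤ φ I a b) (hκ : 0 ≤ κ)
    (ν : (Fin n → K) → ℝ) (hν : ∀ x, 0 ≤ ν x) (hsum : ∑ x, ν x = 1) (x : Fin n → K)
    (E : ℝ) (hE : E = 0 ∨ ∃ i₀ : Fin n, ∃ b₀ : K, b₀ ≠ x i₀
      ∧ E = α i₀ b₀ (x i₀) * ν (Function.update x i₀ b₀)) :
    -(Cbound α κ φ) * ν x + E ≤ mutRecRHS α κ φ ν x := by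
  rw [mutRecRHS, Cbound]
  have h1 := mut_lower_gain α hα_off hα_diag ν hν x E hE
  have h2 := rec_lower φ hφ_nonneg ν hν hsum x
  nlinarith [mul_le_mul_of_nonneg_left h2 hκ]

end lower


lemma diag_nonpos (α : Fin n → K → K → ℝ)
    (hα_off : ∀ i : Fin n, ∀ a b : K, a ≠ b → 0 ≤ α i a b)
    (hα_diag : ∀ i : Fin n, ∀ a : K, α i a a = -∑ b ∈ Finset.univ.erase a, α i a b)
    (i : Fin n) (a : K) : α i a a ≤ 0 := by
  rw [hα_diag]
  simp only [neg_nonpos]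
  exact Finset.sum_nonneg fun b hb => hα_off i a b fun h => (Finset.mem_erase.mp hb).1 h.symm

lemma mono_of_deriv (a : ℝ) (f f' : ℝ → ℝ)
    (hf : ∀ t ∈ Set.Ici a, HasDerivWithinAt f (f' t) (Set.Ici a) t)
    (h0 : ∀ t ∈ Set.Ioi a, 0 ≤ f' t) : MonotoneOn f (Set.Ici a) := by
  refine monotoneOn_of_hasDerivWithinAt_nonneg (f' := f') (convex_Ici a)
    (fun t ht => (hf t ht).continuousWithinAt) (fun t ht => ?_) (fun t ht => ?_)
  · have ht' : t ∈ Set.Ioi a := by rwa [interior_Ici] at ht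
    rw [interior_Ici]
    exact (hf t (Set.Ioi_subset_Ici_self ht')).mono Set.Ioi_subset_Ici_self
  · have ht' : t ∈ Set.Ioi a := by rwa [interior_Ici] at ht
    exact h0 t ht'

lemma anti_of_deriv (a : ℝ) (f f' : ℝ → ℝ)
    (hf : ∀ t ∈ Set.Ici a, HasDerivWithinAt f (f' t) (Set.Ici a) t)
    (h0 : ∀ t ∈ Set.Ioi a, f' t ≤ 0) : AntitoneOn f (Set.Ici a) := by
  refine antitoneOn_of_hasDerivWithinAt_nonpos (f' := f') (convex_Ici a)
    (fun t ht => (hf t ht).continuousWithinAt) (fun t ht => ?_) (fun t ht => ?_)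
  · have ht' : t ∈ Set.Ioi a := by rwa [interior_Ici] at ht
    rw [interior_Ici]
    exact (hf t (Set.Ioi_subset_Ici_self ht')).mono Set.Ioi_subset_Ici_self
  · have ht' : t ∈ Set.Ioi a := by rwa [interior_Ici] at ht
    exact h0 t ht'

section traj
variable (α : Fin n → K → K → ℝ) (κ : ℝ)
  (φ : (I : Finset (Fin n)) → (↥I → K) → (↥I → K) → ℝ)
  (μ : ℝ → (Fin n → K) → ℝ)

lemma decay
    (hα_off : ∀ i : Fin n, ∀ a b : K, a ≠ b → 0 ≤ α i a b)
    (hα_diag : ∀ i : Fin n, ∀ a : K, α i a a = -∑ b ∈ Finset.univ.erase a, α i a b)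
    (hφ_nonneg : ∀ I a b, 0 ≤ φ I a b) (hκ : 0 ≤ κ)
    (hμ_nonneg : ∀ t, 0 ≤ t → ∀ x, 0 ≤ μ t x)
    (hμ_sum : ∀ t, 0 ≤ t → ∑ x, μ t x = 1)
    (hμ_ode : ∀ t, 0 ≤ t → ∀ x,
      HasDerivWithinAt (fun s => μ s x) (mutRecRHS α κ φ (μ t) x) (Set.Ici 0) t)
    (x : Fin n → K) (s t : ℝ) (hs : 0 ≤ s) (hst : s ≤ t) :
    Real.exp (-(Cbound α κ φ * (t - s))) * μ s x ≤ μ t x := by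
  set C := Cbound α κ φ with hC
  have hmono : MonotoneOn (fun τ => Real.exp (C * τ) * μ τ x) (Set.Ici s) := by
    apply mono_of_deriv s _ (fun τ => Real.exp (C * τ) * C * μ τ x
      + Real.exp (C * τ) * mutRecRHS α κ φ (μ τ) x)
    · intro τ hτ
      have h1 : HasDerivAt (fun τ : ℝ => Real.exp (C * τ)) (Real.exp (C * τ) * C) τ := by
        simpa using ((hasDerivAt_id τ).const_mul C).exp
      have h2 := (hμ_ode τ (le_trans hs hτ) x).mono (Set.Ici_subset_Ici.mpr hs)
      exact h1.hasDerivWithinAt.mul h2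
    · intro τ hτ
      have hτ0 : (0:ℝ) ≤ τ := le_trans hs (le_of_lt hτ)
      have hF := F_lower_gain α κ φ hα_off hα_diag hφ_nonneg hκ (μ τ)
        (hμ_nonneg τ hτ0) (hμ_sum τ hτ0) x 0 (Or.inl rfl)
      have he := Real.exp_pos (C * τ)
      nlinarith [mul_le_mul_of_nonneg_left hF he.le]
  have h := hmono (Set.self_mem_Ici) (show t ∈ Set.Ici s from hst) hst
  simp only at h
  have hexp : Real.exp (-(C * (t - s))) = Real.exp (C * s) / Real.exp (C * t) := by
    rw [← Real.exp_sub]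
    ring_nf
  rw [hexp, div_mul_eq_mul_div, div_le_iff₀ (Real.exp_pos _)]
  nlinarith [h]

lemma step
    (hα_off : ∀ i : Fin n, ∀ a b : K, a ≠ b → 0 ≤ α i a b)
    (hα_diag : ∀ i : Fin n, ∀ a : K, α i a a = -∑ b ∈ Finset.univ.erase a, α i a b)
    (hφ_nonneg : ∀ I a b, 0 ≤ φ I a b) (hκ : 0 ≤ κ)
    (hμ_nonneg : ∀ t, 0 ≤ t → ∀ x, 0 ≤ μ t x)
    (hμ_sum : ∀ t, 0 ≤ t → ∑ x, μ t x = 1)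
    (hμ_ode : ∀ t, 0 ≤ t → ∀ x,
      HasDerivWithinAt (fun s => μ s x) (mutRecRHS α κ φ (μ t) x) (Set.Ici 0) t)
    (y : Fin n → K) (i : Fin n) (c : K) (hc : 0 < α i (y i) c)
    (s h : ℝ) (hs : 0 ≤ s) (hh : 0 < h) :
    α i (y i) c * h * Real.exp (-(Cbound α κ φ * h)) * μ s y
      ≤ μ (s + h) (Function.update y i c) := by
  have hyic : y i ≠ c := by
    intro hic
    have := diag_nonpos α hα_off hα_diag i (y i)
    rw [← hic] at hc
    linarith
  set C := Cbound α κ φ with hCdef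
  set x := Function.update y i c with hx
  set r := α i (y i) c with hr
  have hxi : x i = c := Function.update_self i c y
  have hupd : Function.update x i (y i) = y := by
    rw [hx, Function.update_idem, Function.update_eq_self]
  have hmono : MonotoneOn (fun τ => Real.exp (C * τ) * μ τ x
      - (r * Real.exp (C * s) * μ s y) * τ) (Set.Ici s) := by
    apply mono_of_deriv s _ (fun τ => (Real.exp (C * τ) * C * μ τ x
      + Real.exp (C * τ) * mutRecRHS α κ φ (μ τ) x) - r * Real.exp (C * s) * μ s y)
    · intro τ hτ
      have h1 : HasDerivAt (fun τ : ℝ => Real.exp (C * τ)) (Real.exp (C * τ) * C) τ := by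
        simpa using ((hasDerivAt_id τ).const_mul C).exp
      have h2 := (hμ_ode τ (le_trans hs hτ) x).mono (Set.Ici_subset_Ici.mpr hs)
      have h3 := (h1.hasDerivWithinAt.mul h2).sub
        ((hasDerivWithinAt_id τ (Set.Ici s)).const_mul (r * Real.exp (C * s) * μ s y))
      rw [mul_one] at h3
      exact h3
    · intro τ hτ
      have hτ0 : (0:ℝ) ≤ τ := le_trans hs (le_of_lt hτ)
      have hE : r * μ τ y = α i (y i) (x i) * μ τ (Function.update x i (y i)) := by
        rw [hxi, hupd]
      have hF := F_lower_gain α κ φ hα_off hα_diag hφ_nonneg hκ (μ τ)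
        (hμ_nonneg τ hτ0) (hμ_sum τ hτ0) x (r * μ τ y)
        (Or.inr ⟨i, y i, by rw [hxi]; exact hyic, hE⟩)
      have hdec := decay α κ φ μ hα_off hα_diag hφ_nonneg hκ hμ_nonneg hμ_sum hμ_ode
        y s τ hs (le_of_lt hτ)
      rw [← hCdef] at hF hdec
      have he := Real.exp_pos (C * τ)
      have hprod : Real.exp (C * τ) * Real.exp (-(C * (τ - s))) = Real.exp (C * s) := by
        rw [← Real.exp_add]
        ring_nf
      have h1 : Real.exp (C * τ) * (-C * μ τ x + r * μ τ y)
          ≤ Real.exp (C * τ) * mutRecRHS α κ φ (μ τ) x := by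
        apply mul_le_mul_of_nonneg_left _ he.le
        linarith
      have h2 : r * (Real.exp (-(C * (τ - s))) * μ s y) ≤ r * μ τ y :=
        mul_le_mul_of_nonneg_left hdec hc.le
      have h3 := mul_le_mul_of_nonneg_left h2 he.le
      have h4 : Real.exp (C * τ) * Real.exp (-(C * (τ - s))) * (r * μ s y)
          = Real.exp (C * s) * (r * μ s y) := by rw [hprod]
      linarith [h1, h3, h4]
  have hg := hmono (Set.self_mem_Ici) (show s + h ∈ Set.Ici s by simp; linarith) (by linarith)
  simp only at hg
  have hμsx := hμ_nonneg s hs x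
  have hμsy := hμ_nonneg s hs y
  have hexp : Real.exp (-(C * h)) = Real.exp (C * s) / Real.exp (C * (s + h)) := by
    rw [← Real.exp_sub]
    ring_nf
  rw [hexp]
  rw [show r * h * (Real.exp (C * s) / Real.exp (C * (s + h))) * μ s y
    = (r * h * Real.exp (C * s) * μ s y) / Real.exp (C * (s + h)) from by ring,
    div_le_iff₀ (Real.exp_pos _)]
  nlinarith [hg, mul_nonneg (Real.exp_pos (C * s)).le hμsx]

lemma reach_T
    (hα_off : ∀ i : Fin n, ∀ a b : K, a ≠ b → 0 ≤ α i a b)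
    (hα_diag : ∀ i : Fin n, ∀ a : K, α i a a = -∑ b ∈ Finset.univ.erase a, α i a b)
    (hφ_nonneg : ∀ I a b, 0 ≤ φ I a b) (hκ : 0 ≤ κ)
    (hμ_nonneg : ∀ t, 0 ≤ t → ∀ x, 0 ≤ μ t x)
    (hμ_sum : ∀ t, 0 ≤ t → ∑ x, μ t x = 1)
    (hμ_ode : ∀ t, 0 ≤ t → ∀ x,
      HasDerivWithinAt (fun s => μ s x) (mutRecRHS α κ φ (μ t) x) (Set.Ici 0) t)
    (y x : Fin n → K) (hr : Relation.ReflTransGen (GStep α) y x) :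
    ∀ T : ℝ, 0 < T → ∃ c : ℝ, 0 < c ∧ ∀ s, 0 ≤ s → c * μ s y ≤ μ (s + T) x := by
  induction hr with
  | refl =>
    intro T hT
    refine ⟨Real.exp (-(Cbound α κ φ * T)), Real.exp_pos _, fun s hs => ?_⟩
    have := decay α κ φ μ hα_off hα_diag hφ_nonneg hκ hμ_nonneg hμ_sum hμ_ode
      y s (s + T) hs (by linarith)
    have he : s + T - s = T := by ring
    rw [he] at this
    exact this
  | @tail z x' hyz hzx ih =>
    intro T hT
    obtain ⟨c₁, hc₁, H₁⟩ := ih (T / 2) (by linarith)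
    obtain ⟨i, cc, hcc, rfl⟩ := hzx
    refine ⟨α i (z i) cc * (T / 2) * Real.exp (-(Cbound α κ φ * (T / 2))) * c₁,
      mul_pos (mul_pos (mul_pos hcc (by linarith)) (Real.exp_pos _)) hc₁, fun s hs => ?_⟩
    have h1 := H₁ s hs
    have h2 := step α κ φ μ hα_off hα_diag hφ_nonneg hκ hμ_nonneg hμ_sum hμ_ode
      z i cc hcc (s + T / 2) (T / 2) (by linarith) (by linarith)
    have he : s + T / 2 + T / 2 = s + T := by ring
    rw [he] at h2
    have h3 : α i (z i) cc * (T / 2) * Real.exp (-(Cbound α κ φ * (T / 2))) * c₁ * μ s y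
        ≤ α i (z i) cc * (T / 2) * Real.exp (-(Cbound α κ φ * (T / 2))) * μ (s + T / 2) z := by
      have hpos : 0 ≤ α i (z i) cc * (T / 2) * Real.exp (-(Cbound α κ φ * (T / 2))) := by
        positivity
      calc α i (z i) cc * (T / 2) * Real.exp (-(Cbound α κ φ * (T / 2))) * c₁ * μ s y
          = α i (z i) cc * (T / 2) * Real.exp (-(Cbound α κ φ * (T / 2))) * (c₁ * μ s y) := by
            ring
        _ ≤ _ := mul_le_mul_of_nonneg_left h1 hpos
    linarith

lemma uniform_pos [Nonempty (Fin n → K)]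
    (hα_off : ∀ i : Fin n, ∀ a b : K, a ≠ b → 0 ≤ α i a b)
    (hα_diag : ∀ i : Fin n, ∀ a : K, α i a a = -∑ b ∈ Finset.univ.erase a, α i a b)
    (hα_conn : ∀ i : Fin n, ∀ a b : K,
      Relation.ReflTransGen (fun u v => 0 < α i u v) a b)
    (hφ_nonneg : ∀ I a b, 0 ≤ φ I a b) (hκ : 0 ≤ κ)
    (hμ_nonneg : ∀ t, 0 ≤ t → ∀ x, 0 ≤ μ t x)
    (hμ_sum : ∀ t, 0 ≤ t → ∑ x, μ t x = 1)
    (hμ_ode : ∀ t, 0 ≤ t → ∀ x,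
      HasDerivWithinAt (fun s => μ s x) (mutRecRHS α κ φ (μ t) x) (Set.Ici 0) t) :
    ∃ δ : ℝ, 0 < δ ∧ ∀ t, 1 ≤ t → ∀ x, δ ≤ μ t x := by
  have hpair : ∀ p : (Fin n → K) × (Fin n → K), ∃ c : ℝ, 0 < c ∧ ∀ s, 0 ≤ s →
      c * μ s p.1 ≤ μ (s + 1) p.2 := fun p =>
    reach_T α κ φ μ hα_off hα_diag hφ_nonneg hκ hμ_nonneg hμ_sum hμ_ode
      p.1 p.2 (reach α hα_conn p.1 p.2) 1 one_pos
  choose cf hcf0 hcf using hpair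
  have hne : (Finset.univ : Finset ((Fin n → K) × (Fin n → K))).Nonempty :=
    Finset.univ_nonempty
  set c0 := Finset.univ.inf' hne cf with hc0
  have hc0pos : 0 < c0 := by
    rw [hc0, Finset.lt_inf'_iff]
    exact fun p _ => hcf0 p
  set m : ℝ := (Fintype.card (Fin n → K) : ℝ) with hm
  have hmpos : 0 < m := by
    rw [hm]
    exact_mod_cast Fintype.card_pos
  refine ⟨c0 / m, div_pos hc0pos hmpos, fun t ht x => ?_⟩
  set s := t - 1 with hsdef
  have hs : 0 ≤ s := by rw [hsdef]; linarith
  have hy : ∃ y : Fin n → K, 1 / m ≤ μ s y := by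
    have hsum : ∑ _y : Fin n → K, 1 / m ≤ ∑ y : Fin n → K, μ s y := by
      rw [hμ_sum s hs, Finset.sum_const, Finset.card_univ, nsmul_eq_mul]
      rw [hm]
      rw [mul_one_div, div_self (ne_of_gt hmpos)]
    obtain ⟨y, _, hy⟩ := Finset.exists_le_of_sum_le (Finset.univ_nonempty (α := Fin n → K)) hsum
    exact ⟨y, hy⟩
  obtain ⟨y, hy⟩ := hy
  have h1 := hcf (y, x) s hs
  have h2 : c0 / m ≤ cf (y, x) * μ s y := by
    have hc0le : c0 ≤ cf (y, x) := Finset.inf'_le cf (Finset.mem_univ (y, x))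
    calc c0 / m = c0 * (1 / m) := by ring
      _ ≤ cf (y, x) * μ s y :=
        mul_le_mul hc0le hy (by positivity) (le_of_lt (hcf0 (y, x)))
  have hst : s + 1 = t := by rw [hsdef]; ring
  rw [hst] at h1
  linarith

end traj

section lyap
variable (q : Fin n → K → ℝ)

lemma Vf_term_ge (hq_pos : ∀ i a, 0 < q i a) (ν : (Fin n → K) → ℝ)
    (hν : ∀ x, 0 < ν x) (x : Fin n → K) :
    ν x - qP q x ≤ ν x * (Real.log (ν x) - Real.log (qP q x)) := by
  have hq := qP_pos q hq_pos x
  have h := Real.log_le_sub_one_of_pos (div_pos hq (hν x))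
  rw [Real.log_div hq.ne' (hν x).ne'] at h
  have h2 := mul_le_mul_of_nonneg_left h (hν x).le
  have e : ν x * (qP q x / ν x - 1) = qP q x - ν x := by
    rw [mul_sub, mul_div_cancel₀ _ (hν x).ne', mul_one]
  nlinarith

lemma Vf_nonneg (hq_pos : ∀ i a, 0 < q i a) (hq_sum : ∀ i, ∑ a, q i a = 1)
    (ν : (Fin n → K) → ℝ) (hν : ∀ x, 0 < ν x) (hsum : ∑ x, ν x = 1) :
    0 ≤ Vf q ν := by
  have h : ∑ x : Fin n → K, (ν x - qP q x) ≤ Vf q ν :=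
    Finset.sum_le_sum fun x _ => Vf_term_ge q hq_pos ν hν x
  rw [Finset.sum_sub_distrib, hsum, sum_qP q hq_sum] at h
  linarith

lemma Vf_pos (hq_pos : ∀ i a, 0 < q i a) (hq_sum : ∀ i, ∑ a, q i a = 1)
    (ν : (Fin n → K) → ℝ) (hν : ∀ x, 0 < ν x) (hsum : ∑ x, ν x = 1)
    (x₀ : Fin n → K) (hne : ν x₀ ≠ qP q x₀) : 0 < Vf q ν := by
  have h : ∑ x : Fin n → K, (ν x - qP q x) < Vf q ν := by
    refine Finset.sum_lt_sum (fun x _ => Vf_term_ge q hq_pos ν hν x) ⟨x₀, Finset.mem_univ x₀, ?_⟩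
    have hq := qP_pos q hq_pos x₀
    have hr : qP q x₀ / ν x₀ ≠ 1 := by
      intro h
      exact hne ((div_eq_one_iff_eq (hν x₀).ne').mp h).symm
    have h := Real.log_lt_sub_one_of_pos (div_pos hq (hν x₀)) hr
    rw [Real.log_div hq.ne' (hν x₀).ne'] at h
    have h2 := mul_lt_mul_of_pos_left h (hν x₀)
    have e : ν x₀ * (qP q x₀ / ν x₀ - 1) = qP q x₀ - ν x₀ := by
      rw [mul_sub, mul_div_cancel₀ _ (hν x₀).ne', mul_one]
    nlinarith
  rw [Finset.sum_sub_distrib, hsum, sum_qP q hq_sum] at h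
  linarith

lemma Vf_qP (hq_pos : ∀ i a, 0 < q i a) : Vf q (qP q) = 0 := by
  rw [Vf]
  refine Finset.sum_eq_zero fun x _ => ?_
  rw [sub_self, mul_zero]

end lyap

section vderiv
variable (α : Fin n → K → K → ℝ) (κ : ℝ)
  (φ : (I : Finset (Fin n)) → (↥I → K) → (↥I → K) → ℝ)
  (μ : ℝ → (Fin n → K) → ℝ) (q : Fin n → K → ℝ)

lemma V_hasDeriv (hq_pos : ∀ i a, 0 < q i a)
    (hμ_ode : ∀ t, 0 ≤ t → ∀ x,
      HasDerivWithinAt (fun s => μ s x) (mutRecRHS α κ φ (μ t) x) (Set.Ici 0) t)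
    (δ : ℝ) (hδ : 0 < δ) (hpos : ∀ τ, 1 ≤ τ → ∀ x, δ ≤ μ τ x)
    (t : ℝ) (ht : t ∈ Set.Ici (1:ℝ)) :
    HasDerivWithinAt (fun τ => Vf q (μ τ))
      (∑ x : Fin n → K, mutRecRHS α κ φ (μ t) x *
        (Real.log (μ t x) - Real.log (qP q x) + 1)) (Set.Ici 1) t := by
  have ht1 : (1:ℝ) ≤ t := ht
  have H : ∀ x : Fin n → K, HasDerivWithinAt
      (fun τ => μ τ x * (Real.log (μ τ x) - Real.log (qP q x)))
      ((Real.log (μ t x) + 1) * mutRecRHS α κ φ (μ t) x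
        - Real.log (qP q x) * mutRecRHS α κ φ (μ t) x) (Set.Ici 1) t := by
    intro x
    have hu : HasDerivWithinAt (fun τ => μ τ x) (mutRecRHS α κ φ (μ t) x) (Set.Ici 1) t :=
      (hμ_ode t (by linarith) x).mono (Set.Ici_subset_Ici.mpr (by norm_num))
    have hne : μ t x ≠ 0 := ne_of_gt (lt_of_lt_of_le hδ (hpos t ht1 x))
    have h1 : HasDerivWithinAt (fun τ => μ τ x * Real.log (μ τ x))
        ((Real.log (μ t x) + 1) * mutRecRHS α κ φ (μ t) x) (Set.Ici 1) t :=
      by have h := (Real.hasDerivAt_mul_log hne).comp_hasDerivWithinAt t hu; exact h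
    have h2 : HasDerivWithinAt (fun τ => Real.log (qP q x) * μ τ x)
        (Real.log (qP q x) * mutRecRHS α κ φ (μ t) x) (Set.Ici 1) t :=
      hu.const_mul (Real.log (qP q x))
    have h3 := h1.sub h2
    refine h3.congr (fun τ _ => ?_) (by simp only [Pi.sub_apply]; ring)
    simp only [Pi.sub_apply]; ring
  have hsum := HasDerivWithinAt.fun_sum (fun x (_ : x ∈ Finset.univ) => H x)
  have hval : ∑ x : Fin n → K, ((Real.log (μ t x) + 1) * mutRecRHS α κ φ (μ t) x
        - Real.log (qP q x) * mutRecRHS α κ φ (μ t) x)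
      = ∑ x : Fin n → K, mutRecRHS α κ φ (μ t) x *
        (Real.log (μ t x) - Real.log (qP q x) + 1) :=
    Finset.sum_congr rfl fun x _ => by ring
  rw [hval] at hsum
  exact hsum

end vderiv

section cont
variable (α : Fin n → K → K → ℝ) (q : Fin n → K → ℝ) (δ : ℝ)

lemma contLog (hδ : 0 < δ) (z : Fin n → K) :
    ContinuousOn (fun ν : (Fin n → K) → ℝ => Real.log (ν z))
      {ν : (Fin n → K) → ℝ | ∀ x, δ ≤ ν x} := by
  intro ν₀ h
  have happ : Continuous fun p : (Fin n → K) → ℝ => p z := continuous_apply z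
  exact (happ.continuousAt.log (ne_of_gt (lt_of_lt_of_le hδ (h z)))).continuousWithinAt

lemma contVf (hδ : 0 < δ) :
    ContinuousOn (Vf q) {ν : (Fin n → K) → ℝ | ∀ x, δ ≤ ν x} := by
  apply continuousOn_finset_sum
  intro z _
  exact (continuous_apply z).continuousOn.mul
    ((contLog δ hδ z).sub continuousOn_const)

lemma contGf (hδ : 0 < δ) :
    ContinuousOn (Gf α q) {ν : (Fin n → K) → ℝ | ∀ x, δ ≤ ν x} := by
  apply continuousOn_finset_sum
  intro i _
  apply continuousOn_finset_sum
  intro y _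
  apply continuousOn_finset_sum
  intro a _
  refine continuousOn_const.mul ?_
  refine ContinuousOn.sub (ContinuousOn.sub ?_ (continuous_apply y).continuousOn) ?_
  · exact ((continuous_apply (Function.update y i a)).continuousOn.mul
      continuousOn_const).div_const _
  · refine (continuous_apply y).continuousOn.mul ?_
    refine ContinuousOn.sub (ContinuousOn.add (ContinuousOn.sub ?_ ?_) continuousOn_const)
      continuousOn_const
    · exact contLog δ hδ (Function.update y i a)
    · exact contLog δ hδ y

lemma closed_base :
    IsClosed {ν : (Fin n → K) → ℝ | (∀ x, δ ≤ ν x) ∧ ∑ x, ν x = 1} := by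
  have e0 : {ν : (Fin n → K) → ℝ | (∀ x, δ ≤ ν x) ∧ ∑ x, ν x = 1}
      = {ν : (Fin n → K) → ℝ | ∀ x, δ ≤ ν x} ∩ {ν : (Fin n → K) → ℝ | ∑ x, ν x = 1} := rfl
  rw [e0]
  apply IsClosed.inter
  · have e1 : {ν : (Fin n → K) → ℝ | ∀ x, δ ≤ ν x}
        = ⋂ x : Fin n → K, {ν : (Fin n → K) → ℝ | δ ≤ ν x} := by
      ext ν
      simp [Set.mem_iInter]
    rw [e1]
    exact isClosed_iInter fun x => isClosed_le continuous_const (continuous_apply x)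
  · exact isClosed_eq (continuous_finset_sum _ fun x _ => continuous_apply x) continuous_const

lemma compact_base (hδ : 0 < δ) :
    IsCompact {ν : (Fin n → K) → ℝ | (∀ x, δ ≤ ν x) ∧ ∑ x, ν x = 1} := by
  refine IsCompact.of_isClosed_subset
    (isCompact_univ_pi (s := fun _ : Fin n → K => Set.Icc δ 1) fun _ => isCompact_Icc)
    (closed_base δ) ?_
  rintro ν ⟨h1, h2⟩
  intro x _
  refine ⟨h1 x, ?_⟩
  rw [← h2]
  exact Finset.single_le_sum (f := fun z => ν z)
    (fun z _ => le_trans hδ.le (h1 z)) (Finset.mem_univ x)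

end cont

end MRE

/-- every differentiable family of probability measures on `[0,∞)` solving
the mutation–recombination equation converges, as `t → ∞`, to the product distribution
`q_Λ(x) = ∏_i q_i(x_i)`. -/
theorem trajectory_converges_to_product
    {K : Type*} [Fintype K] [DecidableEq K] {n : ℕ}
    (α : Fin n → K → K → ℝ)
    (hα_off : ∀ i : Fin n, ∀ a b : K, a ≠ b → 0 ≤ α i a b)
    (hα_diag : ∀ i : Fin n, ∀ a : K, α i a a = -∑ b ∈ Finset.univ.erase a, α i a b)
    (hα_conn : ∀ i : Fin n, ∀ a b : K,
      Relation.ReflTransGen (fun u v => 0 < α i u v) a b)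
    (q : Fin n → K → ℝ)
    (hq_pos : ∀ i a, 0 < q i a)
    (hq_sum : ∀ i, ∑ a, q i a = 1)
    (hq_stat : ∀ i : Fin n, ∀ b : K, ∑ a, q i a * α i a b = 0)
    (κ : ℝ) (hκ : 0 ≤ κ)
    (φ : (I : Finset (Fin n)) → (↥I → K) → (↥I → K) → ℝ)
    (hφ_symm : ∀ I a b, φ I a b = φ I b a)
    (hφ_nonneg : ∀ I a b, 0 ≤ φ I a b)
    (μ : ℝ → (Fin n → K) → ℝ)
    (hμ_nonneg : ∀ t, 0 ≤ t → ∀ x, 0 ≤ μ t x)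
    (hμ_sum : ∀ t, 0 ≤ t → ∑ x, μ t x = 1)
    (hμ_ode : ∀ t, 0 ≤ t → ∀ x,
      HasDerivWithinAt (fun s => μ s x) (mutRecRHS α κ φ (μ t) x) (Set.Ici 0) t) :
    ∀ x : Fin n → K,
      Filter.Tendsto (fun t => μ t x) Filter.atTop (nhds (∏ i, q i (x i))) := by
  classical
  intro x
  haveI hNE : Nonempty (Fin n → K) := ⟨x⟩
  obtain ⟨δ, hδ, hpos⟩ := MRE.uniform_pos α κ φ μ hα_off hα_diag hα_conn hφ_nonneg hκ
    hμ_nonneg hμ_sum hμ_ode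
  have hposf : ∀ t, 1 ≤ t → ∀ z, 0 < μ t z := fun t ht z => lt_of_lt_of_le hδ (hpos t ht z)
  have hsum1 : ∀ t, 1 ≤ t → ∑ z, μ t z = 1 := fun t ht => hμ_sum t (by linarith)
  set V : ℝ → ℝ := fun t => MRE.Vf q (μ t) with hV
  set F' : ℝ → ℝ := fun t => ∑ z : Fin n → K, mutRecRHS α κ φ (μ t) z *
    (Real.log (μ t z) - Real.log (MRE.qP q z) + 1) with hF'
  have hderiv : ∀ t ∈ Set.Ici (1:ℝ), HasDerivWithinAt V (F' t) (Set.Ici 1) t := fun t ht =>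
    MRE.V_hasDeriv α κ φ μ q hq_pos hμ_ode δ hδ hpos t ht
  have hF'le : ∀ t, 1 ≤ t → F' t ≤ - MRE.Gf α q (μ t) := fun t ht =>
    MRE.main_ineq α hα_off hα_diag q hq_pos hq_stat κ hκ φ hφ_symm hφ_nonneg (μ t) (hposf t ht)
  have hGnn : ∀ t, 1 ≤ t → 0 ≤ MRE.Gf α q (μ t) := fun t ht =>
    MRE.Gf_nonneg α hα_off q hq_pos (μ t) (hposf t ht)
  have hanti : AntitoneOn V (Set.Ici 1) :=
    MRE.anti_of_deriv 1 V F' hderiv fun t ht =>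
      le_trans (hF'le t (le_of_lt ht)) (neg_nonpos.mpr (hGnn t (le_of_lt ht)))
  have hVnn : ∀ t, 1 ≤ t → 0 ≤ V t := fun t ht =>
    MRE.Vf_nonneg q hq_pos hq_sum (μ t) (hposf t ht) (hsum1 t ht)
  set Sv : Set ℝ := V '' Set.Ici 1 with hSv
  have hSvne : Sv.Nonempty := ⟨V 1, 1, Set.self_mem_Ici, rfl⟩
  have hSvbdd : BddBelow Sv := ⟨0, by rintro v ⟨t, ht, rfl⟩; exact hVnn t ht⟩
  set c := sInf Sv with hc
  have hcle : ∀ t, 1 ≤ t → c ≤ V t := fun t ht => csInf_le hSvbdd ⟨t, ht, rfl⟩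
  have hc0 : 0 ≤ c := le_csInf hSvne (by rintro v ⟨t, ht, rfl⟩; exact hVnn t ht)
  have hbase : ∀ t, 1 ≤ t → (∀ z, δ ≤ μ t z) ∧ ∑ z, μ t z = 1 := fun t ht =>
    ⟨hpos t ht, hsum1 t ht⟩
  have hceq : c = 0 := by
    by_contra hcne
    have hcpos : 0 < c := lt_of_le_of_ne hc0 (Ne.symm hcne)
    set KC : Set ((Fin n → K) → ℝ) :=
      {ν | ((∀ z, δ ≤ ν z) ∧ ∑ z, ν z = 1) ∧ c ≤ MRE.Vf q ν} with hKC
    have hKCeq : KC = {ν : (Fin n → K) → ℝ | (∀ z, δ ≤ ν z) ∧ ∑ z, ν z = 1}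
        ∩ MRE.Vf q ⁻¹' (Set.Ici c) := rfl
    have hKCc : IsCompact KC := by
      rw [hKCeq]
      exact IsCompact.of_isClosed_subset (MRE.compact_base δ hδ)
        (ContinuousOn.preimage_isClosed_of_isClosed
          ((MRE.contVf q δ hδ).mono fun ν h => h.1) (MRE.closed_base δ) isClosed_Ici)
        Set.inter_subset_left
    have hKCne : KC.Nonempty := ⟨μ 1, ⟨hbase 1 le_rfl, hcle 1 le_rfl⟩⟩
    obtain ⟨ν₀, hν₀KC, hmin⟩ := hKCc.exists_isMinOn hKCne
      ((MRE.contGf α q δ hδ).mono fun ν h => h.1.1)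
    set m := MRE.Gf α q ν₀ with hm
    have hν₀pos : ∀ z, 0 < ν₀ z := fun z => lt_of_lt_of_le hδ (hν₀KC.1.1 z)
    have hmpos : 0 < m := by
      rcases lt_or_eq_of_le (MRE.Gf_nonneg α hα_off q hq_pos ν₀ hν₀pos) with h | h
      · exact h
      · exfalso
        have heq := MRE.Gf_eq_zero α hα_off hα_conn q hq_pos hq_sum ν₀ hν₀pos hν₀KC.1.2 h.symm
        have hVν₀ : MRE.Vf q ν₀ = 0 := by
          have he : ν₀ = MRE.qP q := funext heq
          rw [he, MRE.Vf_qP q hq_pos]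
        have := hν₀KC.2
        linarith
    have hdesc : AntitoneOn (fun t => V t + m * t) (Set.Ici 1) := by
      apply MRE.anti_of_deriv 1 _ (fun t => F' t + m)
      · intro t ht
        have h1 := hderiv t ht
        have h2 : HasDerivWithinAt (fun t : ℝ => m * t) m (Set.Ici 1) t := by
          simpa using (hasDerivWithinAt_id t (Set.Ici 1)).const_mul m
        exact h1.add h2
      · intro t ht
        have ht1 : (1:ℝ) ≤ t := le_of_lt ht
        have hmem : μ t ∈ KC := ⟨hbase t ht1, hcle t ht1⟩
        have hGm : m ≤ MRE.Gf α q (μ t) := hmin hmem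
        have h3 := hF'le t ht1
        linarith
    set t₀ := (V 1 + m) / m + 1 with ht₀
    have ht₀1 : (1:ℝ) ≤ t₀ := by
      have : 0 ≤ (V 1 + m) / m := div_nonneg (by linarith [hVnn 1 le_rfl]) hmpos.le
      rw [ht₀]
      linarith
    have hd : V t₀ + m * t₀ ≤ V 1 + m * 1 :=
      hdesc Set.self_mem_Ici (show t₀ ∈ Set.Ici (1:ℝ) from ht₀1) ht₀1
    have hVt₀ := hVnn t₀ ht₀1
    have hmt : m * t₀ = V 1 + m + m := by
      rw [ht₀, mul_add, mul_one, mul_div_cancel₀ _ hmpos.ne']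
    linarith
  rw [show (∏ i, q i (x i)) = MRE.qP q x from rfl, Metric.tendsto_atTop]
  intro ε hε
  set KE : Set ((Fin n → K) → ℝ) :=
    {ν | ((∀ z, δ ≤ ν z) ∧ ∑ z, ν z = 1) ∧ ε ≤ |ν x - MRE.qP q x|} with hKE
  by_cases hKEne : KE.Nonempty
  · have hKEeq : KE = {ν : (Fin n → K) → ℝ | (∀ z, δ ≤ ν z) ∧ ∑ z, ν z = 1}
        ∩ {ν : (Fin n → K) → ℝ | ε ≤ |ν x - MRE.qP q x|} := rfl
    have hKEc : IsCompact KE := by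
      rw [hKEeq]
      refine IsCompact.of_isClosed_subset (MRE.compact_base δ hδ)
        (IsClosed.inter (MRE.closed_base δ) ?_) Set.inter_subset_left
      exact isClosed_le continuous_const ((continuous_apply x).sub continuous_const).abs
    obtain ⟨νe, hνeKE, hνemin⟩ := hKEc.exists_isMinOn hKEne
      ((MRE.contVf q δ hδ).mono fun ν h => h.1.1)
    set η := MRE.Vf q νe with hη
    have hνepos : ∀ z, 0 < νe z := fun z => lt_of_lt_of_le hδ (hνeKE.1.1 z)
    have hηpos : 0 < η := by
      apply MRE.Vf_pos q hq_pos hq_sum νe hνepos hνeKE.1.2 x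
      intro h
      have h2 := hνeKE.2
      rw [h] at h2
      simp at h2
      linarith
    have hex : ∃ v ∈ Sv, v < η := by
      refine (csInf_lt_iff hSvbdd hSvne).mp ?_
      rw [← hc, hceq]
      exact hηpos
    obtain ⟨v, ⟨t₁, ht₁, rfl⟩, hvlt⟩ := hex
    refine ⟨t₁, fun t ht => ?_⟩
    have ht1 : (1:ℝ) ≤ t := le_trans ht₁ ht
    have hVt : V t ≤ V t₁ := hanti ht₁ (show t ∈ Set.Ici (1:ℝ) from ht1) ht
    by_contra hcon
    push_neg at hcon
    have hmem : μ t ∈ KE := ⟨hbase t ht1, by rwa [Real.dist_eq] at hcon⟩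
    have hVmt : η ≤ V t := hνemin hmem
    linarith
  · refine ⟨1, fun t ht => ?_⟩
    by_contra hcon
    push_neg at hcon
    exact hKEne ⟨μ t, ⟨hbase t ht, by rwa [Real.dist_eq] at hcon⟩⟩
end

section
/- Fix a finite alphabet K, genome length n, X = (Fin n → K), a subset I ⊆ Fin n, a symmetric nonnegative similarity function φ on pairs of I-substrings, and κ ≥ 0. Let μ : ℝ → (X → ℝ) be a differentiable family of probability measures solving the recombination-only equation dμ(x)/dt = κ·∑_{y_I} ( φ(y_I,x_I)·μ_I(x_I)·μ(x_{Λ∖I}, y_I) − φ(x_I,y_I)·μ_I(y_I)·μ(x) ). Then both marginal distributions are conserved: for every a : I → K the derivative d/dt μ_I(a) = 0, and for every b : (Λ∖I) → K the derivative d/dt μ_{Λ∖I}(b) = 0. -/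
/-- The right-hand side of the recombination-only equation on the subset `I`. -/
def recRHS {K : Type*} [Fintype K] [DecidableEq K] {n : ℕ}
    (I : Finset (Fin n)) (φ : (↥I → K) → (↥I → K) → ℝ) (κ : ℝ)
    (μ : (Fin n → K) → ℝ) (x : Fin n → K) : ℝ :=
  κ * ∑ a : ↥I → K,
      (φ a (subword I x) * marginal μ I (subword I x) * μ (substGenome I x a)
        - φ (subword I x) a * marginal μ I a * μ x)

section aux
variable {K : Type*} [Fintype K] [DecidableEq K] {n : ℕ}

/-- split a genome into its `I` part and its `Iᶜ` part -/
def pairE (K : Type*) {n : ℕ} (I : Finset (Fin n)) :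
    ((↥I → K) × (↥(Iᶜ) → K)) ≃ (Fin n → K) where
  toFun p := fun j => if h : j ∈ I then p.1 ⟨j, h⟩ else p.2 ⟨j, Finset.mem_compl.2 h⟩
  invFun x := (subword I x, subword Iᶜ x)
  left_inv p := by
    refine Prod.ext ?_ ?_ <;> funext i
    · simp [subword, i.2]
    · have : (i : Fin n) ∉ I := Finset.mem_compl.1 i.2
      simp [subword, this]
  right_inv x := by
    funext j
    by_cases h : j ∈ I <;> simp [subword, h]

lemma subword_pairE_fst (I : Finset (Fin n)) (p : (↥I → K) × (↥(Iᶜ) → K)) :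
    subword I (pairE K I p) = p.1 := by
  funext i; simp [subword, pairE, i.2]

lemma subword_pairE_snd (I : Finset (Fin n)) (p : (↥I → K) × (↥(Iᶜ) → K)) :
    subword Iᶜ (pairE K I p) = p.2 := by
  funext i
  have : (i : Fin n) ∉ I := Finset.mem_compl.1 i.2
  simp [subword, pairE, this]

lemma substGenome_pairE (I : Finset (Fin n)) (a c : ↥I → K) (b : ↥(Iᶜ) → K) :
    substGenome I (pairE K I (a, b)) c = pairE K I (c, b) := by
  funext j
  by_cases h : j ∈ I <;> simp [substGenome, pairE, h]

lemma marginal_eq (ν : (Fin n → K) → ℝ) (I : Finset (Fin n)) (a : ↥I → K) :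
    marginal ν I a = ∑ b : ↥(Iᶜ) → K, ν (pairE K I (a, b)) := by
  rw [marginal, ← Equiv.sum_comp (pairE K I)]
  simp_rw [subword_pairE_fst]
  rw [Fintype.sum_prod_type, Finset.sum_comm]
  simp

lemma recRHS_pairE (I : Finset (Fin n)) (φ : (↥I → K) → (↥I → K) → ℝ) (κ : ℝ)
    (ν : (Fin n → K) → ℝ) (c : ↥I → K) (b : ↥(Iᶜ) → K) :
    recRHS I φ κ ν (pairE K I (c, b)) =
      κ * ∑ a : ↥I → K,
        (φ a c * marginal ν I c * ν (pairE K I (a, b))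
          - φ c a * marginal ν I a * ν (pairE K I (c, b))) := by
  simp [recRHS, subword_pairE_fst, substGenome_pairE]

lemma keyI (I : Finset (Fin n)) (φ : (↥I → K) → (↥I → K) → ℝ)
    (hφ_symm : ∀ a b, φ a b = φ b a) (κ : ℝ)
    (ν : (Fin n → K) → ℝ) (a : ↥I → K) :
    ∑ x : Fin n → K, (if subword I x = a then recRHS I φ κ ν x else 0) = 0 := by
  rw [← Equiv.sum_comp (pairE K I)]
  simp_rw [subword_pairE_fst]
  rw [Fintype.sum_prod_type, Finset.sum_comm]
  have h1 : ∀ y : ↥(Iᶜ) → K,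
      (∑ x : ↥I → K, if (x, y).1 = a then recRHS I φ κ ν (pairE K I (x, y)) else 0)
        = recRHS I φ κ ν (pairE K I (a, y)) := fun y => by simp
  simp_rw [h1, recRHS_pairE, Finset.mul_sum, mul_sub, Finset.sum_sub_distrib]
  rw [sub_eq_zero]
  rw [show (∑ y : ↥(Iᶜ) → K, ∑ c : ↥I → K,
        κ * (φ c a * marginal ν I a * ν (pairE K I (c, y))))
      = ∑ c : ↥I → K, ∑ y : ↥(Iᶜ) → K,
        κ * (φ c a * marginal ν I a * ν (pairE K I (c, y))) from Finset.sum_comm]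
  conv_rhs => rw [Finset.sum_comm]
  simp_rw [← mul_assoc, ← Finset.mul_sum, ← marginal_eq]
  refine Finset.sum_congr rfl fun c _ => ?_
  rw [hφ_symm a c]; ring

lemma keyC (I : Finset (Fin n)) (φ : (↥I → K) → (↥I → K) → ℝ) (κ : ℝ)
    (ν : (Fin n → K) → ℝ) (b : ↥(Iᶜ) → K) :
    ∑ x : Fin n → K, (if subword Iᶜ x = b then recRHS I φ κ ν x else 0) = 0 := by
  rw [← Equiv.sum_comp (pairE K I)]
  simp_rw [subword_pairE_snd]
  rw [Fintype.sum_prod_type]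
  have h1 : ∀ c : ↥I → K,
      (∑ y : ↥(Iᶜ) → K, if (c, y).2 = b then recRHS I φ κ ν (pairE K I (c, y)) else 0)
        = recRHS I φ κ ν (pairE K I (c, b)) := fun c => by simp
  simp_rw [h1, recRHS_pairE, Finset.mul_sum, mul_sub, Finset.sum_sub_distrib]
  rw [sub_eq_zero]
  exact Finset.sum_comm

end aux

/-- along any differentiable solution of the recombination-only equation,
both marginal distributions (on `I` and on its complement) are conserved. -/
theorem recombination_conserves_marginals
    {K : Type*} [Fintype K] [DecidableEq K] {n : ℕ}
    (I : Finset (Fin n))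
    (φ : (↥I → K) → (↥I → K) → ℝ)
    (hφ_symm : ∀ a b, φ a b = φ b a)
    (hφ_nonneg : ∀ a b, 0 ≤ φ a b)
    (κ : ℝ) (hκ : 0 ≤ κ)
    (μ : ℝ → (Fin n → K) → ℝ)
    (hμ_nonneg : ∀ t x, 0 ≤ μ t x)
    (hμ_sum : ∀ t, ∑ x, μ t x = 1)
    (hμ_ode : ∀ t x, HasDerivAt (fun s => μ s x) (recRHS I φ κ (μ t) x) t) :
    ∀ t : ℝ,
      (∀ a : ↥I → K, deriv (fun s => marginal (μ s) I a) t = 0) ∧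
      (∀ b : ↥(Iᶜ) → K, deriv (fun s => marginal (μ s) Iᶜ b) t = 0) := by
  intro t
  have hterm : ∀ (J : Finset (Fin n)) (c : ↥J → K) (x : Fin n → K),
      HasDerivAt (fun s => if subword J x = c then μ s x else 0)
        (if subword J x = c then recRHS I φ κ (μ t) x else 0) t := by
    intro J c x
    by_cases h : subword J x = c
    · simpa [h] using hμ_ode t x
    · simpa [h] using hasDerivAt_const t (0 : ℝ)
  have hder : ∀ (J : Finset (Fin n)) (c : ↥J → K),
      HasDerivAt (fun s => marginal (μ s) J c)
        (∑ x : Fin n → K, if subword J x = c then recRHS I φ κ (μ t) x else 0) t := by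
    intro J c
    simpa [marginal] using
      HasDerivAt.fun_sum (fun x (_ : x ∈ Finset.univ) => hterm J c x)
  constructor
  · intro a
    rw [(hder I a).deriv]
    exact keyI I φ hφ_symm κ (μ t) a
  · intro b
    rw [(hder Iᶜ b).deriv]
    exact keyC I φ κ (μ t) b
end

section
/- Fix a finite alphabet K, genome length n, X = (Fin n → K), a subset I ⊆ Fin n, a symmetric nonnegative similarity function φ on pairs of I-substrings, κ ≥ 0, and a strictly positive probability measure q on X of product form across I and its complement, i.e. q(x) = q_{Λ∖I}(x_{Λ∖I})·q_I(x_I). Let μ : ℝ → (X → ℝ) be a differentiable family of strictly positive probability measures solving the recombination-only equation dμ(x)/dt = κ·∑_{y_I} ( φ(y_I,x_I)·μ_I(x_I)·μ(x_{Λ∖I}, y_I) − φ(x_I,y_I)·μ_I(y_I)·μ(x) ). Then the relative entropy D(μ(t)|q) = ∑_x μ(t)(x)·ln(μ(t)(x)/q(x)) has non-positive time derivative at every t. -/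
namespace RecEnt
variable {K : Type*} [Fintype K] [DecidableEq K] {n : ℕ}

lemma subword_subst (I : Finset (Fin n)) (x : Fin n → K) (a : ↥I → K) :
    subword I (substGenome I x a) = a := by
  funext i
  simp [subword, substGenome, i.2]

lemma subst_subword (I : Finset (Fin n)) (x : Fin n → K) (a : ↥I → K) :
    substGenome I (substGenome I x a) (subword I x) = x := by
  funext j
  by_cases h : j ∈ I <;> simp [substGenome, subword, h]

lemma subword_compl_subst (I : Finset (Fin n)) (x : Fin n → K) (a : ↥I → K) :
    subword Iᶜ (substGenome I x a) = subword Iᶜ x := by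
  funext j
  have hj : (j : Fin n) ∉ I := Finset.mem_compl.mp j.2
  simp [subword, substGenome, hj]

lemma sum_invol (I : Finset (Fin n)) (F : (Fin n → K) → (↥I → K) → ℝ) :
    ∑ x : Fin n → K, ∑ a : ↥I → K, F (substGenome I x a) (subword I x)
      = ∑ x : Fin n → K, ∑ a : ↥I → K, F x a := by
  have hinv : Function.Involutive
      (fun p : (Fin n → K) × (↥I → K) => (substGenome I p.1 p.2, subword I p.1)) := by
    intro p
    simp [subword_subst, subst_subword]
  calc ∑ x : Fin n → K, ∑ a : ↥I → K, F (substGenome I x a) (subword I x)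
      = ∑ p : (Fin n → K) × (↥I → K), F (substGenome I p.1 p.2) (subword I p.1) := by
        rw [← Fintype.sum_prod_type']
    _ = ∑ p : (Fin n → K) × (↥I → K), F p.1 p.2 :=
        Fintype.sum_bijective _ hinv.bijective _ _ (fun p => rfl)
    _ = ∑ x : Fin n → K, ∑ a : ↥I → K, F x a := by rw [← Fintype.sum_prod_type']

lemma sum_mul_subword (J : Finset (Fin n)) (p : (Fin n → K) → ℝ) (g : (↥J → K) → ℝ) :
    ∑ x : Fin n → K, p x * g (subword J x) = ∑ b : ↥J → K, marginal p J b * g b := by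
  unfold marginal
  simp_rw [Finset.sum_mul, ite_mul, zero_mul]
  rw [Finset.sum_comm]
  refine Finset.sum_congr rfl fun x _ => ?_
  rw [Finset.sum_ite_eq]
  simp

lemma marginal_pos (J : Finset (Fin n)) (p : (Fin n → K) → ℝ)
    (hp : ∀ x, 0 < p x) (x0 : Fin n → K) (b : ↥J → K) :
    0 < marginal p J b := by
  unfold marginal
  refine Finset.sum_pos' (fun x _ => ?_) ⟨substGenome J x0 b, Finset.mem_univ _, ?_⟩
  · split <;> simp [le_of_lt (hp x)]
  · rw [subword_subst]
    simp [hp]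

lemma sum_antisymm {A : Type*} [Fintype A] (F : A → A → ℝ)
    (h : ∀ a b, F a b = -F b a) : ∑ a : A, ∑ b : A, F a b = 0 := by
  have h2 : ∑ a : A, ∑ b : A, F a b = -∑ a : A, ∑ b : A, F a b := by
    conv_lhs => rw [Finset.sum_comm]
    rw [← Finset.sum_neg_distrib]
    exact Finset.sum_congr rfl fun a _ => by
      rw [← Finset.sum_neg_distrib]
      exact Finset.sum_congr rfl fun b _ => h b a
  linarith

lemma log_step (φv m1 m2 p1 p2 : ℝ) (hφ : 0 ≤ φv) (hm1 : 0 < m1) (hm2 : 0 < m2)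
    (hp1 : 0 < p1) (hp2 : 0 < p2) :
    φv * m2 * p1 * (Real.log p2 - Real.log p1)
      ≤ φv * m1 * p2 - φv * m2 * p1
        - φv * m2 * p1 * (Real.log m1 - Real.log m2) := by
  have hkey : Real.log p2 - Real.log p1 + (Real.log m1 - Real.log m2)
      ≤ m1 * p2 / (m2 * p1) - 1 := by
    have h := Real.log_le_sub_one_of_pos (show (0:ℝ) < m1 * p2 / (m2 * p1) by positivity)
    rw [Real.log_div (by positivity) (by positivity),
        Real.log_mul (ne_of_gt hm1) (ne_of_gt hp2),
        Real.log_mul (ne_of_gt hm2) (ne_of_gt hp1)] at h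
    linarith
  have hw : (0:ℝ) ≤ φv * m2 * p1 := by positivity
  have h2 := mul_le_mul_of_nonneg_left hkey hw
  have h3 : φv * m2 * p1 * (m1 * p2 / (m2 * p1)) = φv * m1 * p2 := by
    field_simp
  nlinarith [h2, h3]


lemma sum_w_antisym (I : Finset (Fin n)) (φ : (↥I → K) → (↥I → K) → ℝ)
    (hφ_symm : ∀ a b, φ a b = φ b a) (p : (Fin n → K) → ℝ) (u : (↥I → K) → ℝ) :
    ∑ x : Fin n → K, ∑ a : ↥I → K,
      φ (subword I x) a * marginal p I a * p x * (u (subword I x) - u a) = 0 := by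
  rw [Finset.sum_comm]
  have h1 : ∀ a : ↥I → K,
      ∑ x : Fin n → K, φ (subword I x) a * marginal p I a * p x * (u (subword I x) - u a)
        = ∑ b : ↥I → K, marginal p I b * (φ b a * marginal p I a * (u b - u a)) := by
    intro a
    rw [← sum_mul_subword I p (fun b => φ b a * marginal p I a * (u b - u a))]
    exact Finset.sum_congr rfl fun x _ => by ring
  rw [Finset.sum_congr rfl fun a _ => h1 a]
  exact sum_antisymm (fun a b => marginal p I b * (φ b a * marginal p I a * (u b - u a)))
    (fun a b => by rw [hφ_symm b a]; ring)

lemma entropy_production_nonpos (I : Finset (Fin n))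
    (φ : (↥I → K) → (↥I → K) → ℝ) (hφ_symm : ∀ a b, φ a b = φ b a)
    (hφ_nonneg : ∀ a b, 0 ≤ φ a b) (κ : ℝ) (hκ : 0 ≤ κ)
    (q p : (Fin n → K) → ℝ) (hq_pos : ∀ x, 0 < q x)
    (hq_prod : ∀ x, q x = marginal q Iᶜ (subword Iᶜ x) * marginal q I (subword I x))
    (hp_pos : ∀ x, 0 < p x) (x0 : Fin n → K) :
    ∑ x : Fin n → K, recRHS I φ κ p x * (Real.log (p x / q x) + 1) ≤ 0 := by
  classical
  set m : (↥I → K) → ℝ := marginal p I with hm_def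
  set mq : (↥I → K) → ℝ := marginal q I with hmq_def
  set mqc : (↥Iᶜ → K) → ℝ := marginal q Iᶜ with hmqc_def
  have hm_pos : ∀ b, 0 < m b := fun b => marginal_pos I p hp_pos x0 b
  have hmq_pos : ∀ b, 0 < mq b := fun b => marginal_pos I q hq_pos x0 b
  have hmqc_pos : ∀ b, 0 < mqc b := fun b => marginal_pos Iᶜ q hq_pos x0 b
  set c : (Fin n → K) → ℝ := fun x => Real.log (p x / q x) + 1 with hc_def
  -- Step A : pull out κ
  have hA : (∑ x : Fin n → K, recRHS I φ κ p x * c x)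
      = κ * ∑ x : Fin n → K, ∑ a : ↥I → K,
          ((φ a (subword I x) * m (subword I x) * p (substGenome I x a)) * c x
            - (φ (subword I x) a * m a * p x) * c x) := by
    rw [Finset.mul_sum]
    refine Finset.sum_congr rfl fun x _ => ?_
    rw [recRHS, mul_assoc, Finset.sum_mul]
    congr 1
    exact Finset.sum_congr rfl fun a _ => by ring
  rw [hA]
  refine mul_nonpos_of_nonneg_of_nonpos hκ ?_
  -- Step B : involution on the gain term
  have hB := sum_invol I
    (fun x a => φ (subword I x) a * m a * p x * c (substGenome I x a))
  simp only [subword_subst, subst_subword] at hB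
  have hsplit : (∑ x : Fin n → K, ∑ a : ↥I → K,
      ((φ a (subword I x) * m (subword I x) * p (substGenome I x a)) * c x
        - (φ (subword I x) a * m a * p x) * c x))
      = ∑ x : Fin n → K, ∑ a : ↥I → K,
          φ (subword I x) a * m a * p x * (c (substGenome I x a) - c x) := by
    simp only [Finset.sum_sub_distrib]
    rw [hB]
    simp only [mul_sub, Finset.sum_sub_distrib]
  rw [hsplit]
  -- Step C : split the log difference
  have hcdiff : ∀ (x : Fin n → K) (a : ↥I → K), c (substGenome I x a) - c x
      = (Real.log (p (substGenome I x a)) - Real.log (p x))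
        + (Real.log (mq (subword I x)) - Real.log (mq a)) := by
    intro x a
    have h1 := hq_prod x
    have h2 := hq_prod (substGenome I x a)
    rw [subword_compl_subst, subword_subst] at h2
    simp only [hc_def]
    rw [Real.log_div (ne_of_gt (hp_pos _)) (ne_of_gt (hq_pos _)),
        Real.log_div (ne_of_gt (hp_pos _)) (ne_of_gt (hq_pos _)), h1, h2,
        Real.log_mul (ne_of_gt (hmqc_pos _)) (ne_of_gt (hmq_pos _)),
        Real.log_mul (ne_of_gt (hmqc_pos _)) (ne_of_gt (hmq_pos _))]
    ring
  have h0 : ∑ x : Fin n → K, ∑ a : ↥I → K,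
        φ (subword I x) a * m a * p x * (c (substGenome I x a) - c x)
      = ∑ x : Fin n → K, ∑ a : ↥I → K,
          (φ (subword I x) a * m a * p x
              * (Real.log (p (substGenome I x a)) - Real.log (p x))
            + φ (subword I x) a * m a * p x
              * ((fun b => Real.log (mq b)) (subword I x) - (fun b => Real.log (mq b)) a)) :=
    Finset.sum_congr rfl fun x _ => Finset.sum_congr rfl fun a _ => by
      rw [hcdiff x a]; dsimp only; ring
  rw [h0]
  simp only [Finset.sum_add_distrib]
  have hM : ∑ x : Fin n → K, ∑ a : ↥I → K,
      φ (subword I x) a * m a * p x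
        * ((fun b => Real.log (mq b)) (subword I x) - (fun b => Real.log (mq b)) a) = 0 :=
    sum_w_antisym I φ hφ_symm p (fun b => Real.log (mq b))
  rw [hM, add_zero]
  -- Step E : bound the remaining term
  have hstep : ∀ (x : Fin n → K) (a : ↥I → K),
      φ (subword I x) a * m a * p x
          * (Real.log (p (substGenome I x a)) - Real.log (p x))
        ≤ φ (subword I x) a * m (subword I x) * p (substGenome I x a)
            - φ (subword I x) a * m a * p x
            - φ (subword I x) a * m a * p x
              * ((fun b => Real.log (m b)) (subword I x) - (fun b => Real.log (m b)) a) :=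
    fun x a => log_step _ _ _ _ _ (hφ_nonneg _ _) (hm_pos _) (hm_pos _) (hp_pos _) (hp_pos _)
  have hle := Finset.sum_le_sum fun (x : Fin n → K) (_ : x ∈ Finset.univ) =>
    Finset.sum_le_sum fun (a : ↥I → K) (_ : a ∈ Finset.univ) => hstep x a
  have hE := sum_invol I (fun x a => φ a (subword I x) * m a * p x)
  simp only [subword_subst, subst_subword] at hE
  have hE2 : ∑ x : Fin n → K, ∑ a : ↥I → K, φ a (subword I x) * m a * p x
      = ∑ x : Fin n → K, ∑ a : ↥I → K, φ (subword I x) a * m a * p x :=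
    Finset.sum_congr rfl fun x _ => Finset.sum_congr rfl fun a _ => by rw [hφ_symm]
  have hZ : ∑ x : Fin n → K, ∑ a : ↥I → K,
      φ (subword I x) a * m a * p x
        * ((fun b => Real.log (m b)) (subword I x) - (fun b => Real.log (m b)) a) = 0 :=
    sum_w_antisym I φ hφ_symm p (fun b => Real.log (m b))
  have hsplit2 : ∑ x : Fin n → K, ∑ a : ↥I → K,
      (φ (subword I x) a * m (subword I x) * p (substGenome I x a)
        - φ (subword I x) a * m a * p x
        - φ (subword I x) a * m a * p x
          * ((fun b => Real.log (m b)) (subword I x) - (fun b => Real.log (m b)) a))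
      = (∑ x : Fin n → K, ∑ a : ↥I → K,
          φ (subword I x) a * m (subword I x) * p (substGenome I x a))
        - (∑ x : Fin n → K, ∑ a : ↥I → K, φ (subword I x) a * m a * p x)
        - ∑ x : Fin n → K, ∑ a : ↥I → K,
            φ (subword I x) a * m a * p x
              * ((fun b => Real.log (m b)) (subword I x) - (fun b => Real.log (m b)) a) := by
    simp only [Finset.sum_sub_distrib]
  rw [hsplit2, hE, hE2, hZ] at hle
  linarith

end RecEnt

/-- along a strictly positive differentiable solution of the
recombination-only equation, the relative entropy with respect to any strictly positive
probability measure `q` of product form across `I` and its complement has non-positive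
time derivative. -/


theorem recombination_relative_entropy_nonincreasing
    {K : Type*} [Fintype K] [DecidableEq K] {n : ℕ}
    (I : Finset (Fin n))
    (φ : (↥I → K) → (↥I → K) → ℝ)
    (hφ_symm : ∀ a b, φ a b = φ b a)
    (hφ_nonneg : ∀ a b, 0 ≤ φ a b)
    (κ : ℝ) (hκ : 0 ≤ κ)
    (q : (Fin n → K) → ℝ)
    (hq_pos : ∀ x, 0 < q x)
    (hq_sum : ∑ x, q x = 1)
    (hq_prod : ∀ x, q x = marginal q Iᶜ (subword Iᶜ x) * marginal q I (subword I x))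
    (μ : ℝ → (Fin n → K) → ℝ)
    (hμ_pos : ∀ t x, 0 < μ t x)
    (hμ_sum : ∀ t, ∑ x, μ t x = 1)
    (hμ_ode : ∀ t x, HasDerivAt (fun s => μ s x) (recRHS I φ κ (μ t) x) t) :
    ∀ t : ℝ, deriv (fun s => ∑ x, μ s x * Real.log (μ s x / q x)) t ≤ 0 := by
  intro t
  have hX : Nonempty (Fin n → K) := by
    by_contra h
    rw [not_nonempty_iff] at h
    have h1 := hμ_sum t
    rw [Finset.univ_eq_empty, Finset.sum_empty] at h1
    norm_num at h1
  obtain ⟨x0⟩ := hX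
  have hderiv : HasDerivAt (fun s => ∑ x, μ s x * Real.log (μ s x / q x))
      (∑ x, recRHS I φ κ (μ t) x * (Real.log (μ t x / q x) + 1)) t := by
    refine HasDerivAt.fun_sum fun x _ => ?_
    have h1 := hμ_ode t x
    have hfun : (fun s => μ s x * Real.log (μ s x / q x))
        = fun s => μ s x * (Real.log (μ s x) - Real.log (q x)) := by
      funext s
      rw [Real.log_div (ne_of_gt (hμ_pos s x)) (ne_of_gt (hq_pos x))]
    rw [hfun]
    have hlog : HasDerivAt (fun s => Real.log (μ s x))
        ((μ t x)⁻¹ * recRHS I φ κ (μ t) x) t :=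
      by have := (Real.hasDerivAt_log (ne_of_gt (hμ_pos t x))).comp t h1; exact this
    have h2 := h1.fun_mul (hlog.sub_const (Real.log (q x)))
    refine h2.congr_deriv ?_
    have hne : μ t x ≠ 0 := ne_of_gt (hμ_pos t x)
    rw [Real.log_div hne (ne_of_gt (hq_pos x)),
        mul_comm ((μ t x)⁻¹) (recRHS I φ κ (μ t) x), ← mul_assoc,
        mul_comm (μ t x) (recRHS I φ κ (μ t) x), mul_inv_cancel_right₀ hne]
    ring
  rw [hderiv.deriv]
  exact RecEnt.entropy_production_nonpos I φ hφ_symm hφ_nonneg κ hκ q (μ t) hq_pos hq_prod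
    (hμ_pos t) x0
end

section
/- Fix a finite alphabet K, genome length n, X = (Fin n → K), a subset I ⊆ Fin n, a symmetric nonnegative similarity function φ on pairs of I-substrings, κ ≥ 0, and a strictly positive probability measure q on X of product form q(x) = q_{Λ∖I}(x_{Λ∖I})·q_I(x_I). Let μ : ℝ → (X → ℝ) be a differentiable family of probability measures solving the recombination-only equation dμ(x)/dt = κ·∑_{y_I} ( φ(y_I,x_I)·μ_I(x_I)·μ(x_{Λ∖I}, y_I) − φ(x_I,y_I)·μ_I(y_I)·μ(x) ). Then the quantity ∑_x (ln q(x))·μ(t)(x) is constant in t: its time derivative is zero at every t. -/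
section Helpers
variable {K : Type*} {n : ℕ}

lemma subword_substGenome (I : Finset (Fin n)) (x : Fin n → K) (a : ↥I → K) :
    subword I (substGenome I x a) = a := by
  funext i
  simp [subword, substGenome, i.2]

lemma subword_compl_substGenome (I : Finset (Fin n)) (x : Fin n → K) (a : ↥I → K) :
    subword Iᶜ (substGenome I x a) = subword Iᶜ x := by
  funext i
  have hi : i.1 ∉ I := by have := i.2; simp only [Finset.mem_compl] at this; exact this
  simp [subword, substGenome, hi]

lemma substGenome_substGenome (I : Finset (Fin n)) (x : Fin n → K) (a b : ↥I → K) :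
    substGenome I (substGenome I x a) b = substGenome I x b := by
  funext j
  by_cases h : j ∈ I <;> simp [substGenome, h]

lemma substGenome_subword (I : Finset (Fin n)) (x : Fin n → K) :
    substGenome I x (subword I x) = x := by
  funext j
  by_cases h : j ∈ I <;> simp [substGenome, subword, h]

lemma sum_subword_mul [Fintype K] [DecidableEq K] (I : Finset (Fin n))
    (f : (↥I → K) → ℝ) (μ : (Fin n → K) → ℝ) :
    ∑ x : Fin n → K, f (subword I x) * μ x = ∑ c : ↥I → K, f c * marginal μ I c := by
  simp only [marginal, Finset.mul_sum, mul_ite, mul_zero]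
  rw [Finset.sum_comm]
  simp

end Helpers

/-- along any differentiable solution of the recombination-only equation,
the mean of `ln q` with respect to `μ(t)`, for a strictly positive probability measure `q`
of product form across `I` and its complement, is constant in time: its derivative
vanishes at every `t`. -/
theorem recombination_conserves_log_mean
    {K : Type*} [Fintype K] [DecidableEq K] {n : ℕ}
    (I : Finset (Fin n))
    (φ : (↥I → K) → (↥I → K) → ℝ)
    (hφ_symm : ∀ a b, φ a b = φ b a)
    (hφ_nonneg : ∀ a b, 0 ≤ φ a b)
    (κ : ℝ) (hκ : 0 ≤ κ)
    (q : (Fin n → K) → ℝ)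
    (hq_pos : ∀ x, 0 < q x)
    (hq_sum : ∑ x, q x = 1)
    (hq_prod : ∀ x, q x = marginal q Iᶜ (subword Iᶜ x) * marginal q I (subword I x))
    (μ : ℝ → (Fin n → K) → ℝ)
    (hμ_nonneg : ∀ t x, 0 ≤ μ t x)
    (hμ_sum : ∀ t, ∑ x, μ t x = 1)
    (hμ_ode : ∀ t x, HasDerivAt (fun s => μ s x) (recRHS I φ κ (μ t) x) t) :
    ∀ t : ℝ, deriv (fun s => ∑ x, Real.log (q x) * μ s x) t = 0 := by
  intro t
  have hderiv : HasDerivAt (fun s => ∑ x, Real.log (q x) * μ s x)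
      (∑ x, Real.log (q x) * recRHS I φ κ (μ t) x) t := by
    apply HasDerivAt.fun_sum
    intro x _
    exact (hμ_ode t x).const_mul _
  rw [hderiv.deriv]
  -- nonemptiness of genome space
  have hX : Nonempty (Fin n → K) := by
    by_contra h
    rw [not_nonempty_iff] at h
    simp at hq_sum
  obtain ⟨y0⟩ := hX
  -- marginals are nonzero
  have hmqc_ne : ∀ x : Fin n → K, marginal q Iᶜ (subword Iᶜ x) ≠ 0 := by
    intro x
    exact left_ne_zero_of_mul (by rw [← hq_prod x]; exact (hq_pos x).ne')
  have hmq_ne : ∀ b : ↥I → K, marginal q I b ≠ 0 := by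
    intro b
    have h := (hq_pos (substGenome I y0 b)).ne'
    rw [hq_prod (substGenome I y0 b), subword_substGenome] at h
    exact right_ne_zero_of_mul h
  -- log decomposition
  have hlog : ∀ (y : Fin n → K) (b : ↥I → K),
      Real.log (q (substGenome I y b)) - Real.log (q y)
        = Real.log (marginal q I b) - Real.log (marginal q I (subword I y)) := by
    intro y b
    rw [hq_prod (substGenome I y b), hq_prod y, subword_substGenome,
      subword_compl_substGenome,
      Real.log_mul (hmqc_ne y) (hmq_ne b), Real.log_mul (hmqc_ne y) (hmq_ne (subword I y))]
    ring
  -- the involution (x, a) ↦ (substGenome I x a, subword I x)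
  have hinv : Function.Involutive
      (fun p : (Fin n → K) × (↥I → K) => (substGenome I p.1 p.2, subword I p.1)) := by
    intro p
    simp [substGenome_substGenome, subword_substGenome, substGenome_subword]
  -- reindexing the gain term
  have hA : ∑ x : Fin n → K, ∑ a : ↥I → K,
        Real.log (q x) * (φ a (subword I x) * marginal (μ t) I (subword I x)
          * μ t (substGenome I x a))
      = ∑ x : Fin n → K, ∑ a : ↥I → K,
        Real.log (q (substGenome I x a)) * (φ (subword I x) a * marginal (μ t) I a * μ t x) := by
    have h := Fintype.sum_bijective _ hinv.bijective
      (fun p : (Fin n → K) × (↥I → K) =>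
        Real.log (q (substGenome I p.1 p.2))
          * (φ (subword I p.1) p.2 * marginal (μ t) I p.2 * μ t p.1))
      (fun p : (Fin n → K) × (↥I → K) =>
        Real.log (q p.1) * (φ p.2 (subword I p.1) * marginal (μ t) I (subword I p.1)
          * μ t (substGenome I p.1 p.2)))
      (fun p => by
        simp [subword_substGenome, substGenome_substGenome, substGenome_subword])
    rw [Fintype.sum_prod_type, Fintype.sum_prod_type] at h
    exact h.symm
  -- the key vanishing sum
  have key : ∑ x : Fin n → K, ∑ a : ↥I → K,
      Real.log (q x) * (φ a (subword I x) * marginal (μ t) I (subword I x)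
          * μ t (substGenome I x a)
        - φ (subword I x) a * marginal (μ t) I a * μ t x) = 0 := by
    have h1 : ∑ x : Fin n → K, ∑ a : ↥I → K,
        Real.log (q x) * (φ a (subword I x) * marginal (μ t) I (subword I x)
            * μ t (substGenome I x a)
          - φ (subword I x) a * marginal (μ t) I a * μ t x)
        = ∑ x : Fin n → K,
          (∑ a : ↥I → K, (Real.log (marginal q I a) - Real.log (marginal q I (subword I x)))
            * (φ (subword I x) a * marginal (μ t) I a)) * μ t x := by
      calc ∑ x : Fin n → K, ∑ a : ↥I → K,
            Real.log (q x) * (φ a (subword I x) * marginal (μ t) I (subword I x)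
                * μ t (substGenome I x a)
              - φ (subword I x) a * marginal (μ t) I a * μ t x)
          = (∑ x : Fin n → K, ∑ a : ↥I → K,
              Real.log (q x) * (φ a (subword I x) * marginal (μ t) I (subword I x)
                * μ t (substGenome I x a)))
            - ∑ x : Fin n → K, ∑ a : ↥I → K,
              Real.log (q x) * (φ (subword I x) a * marginal (μ t) I a * μ t x) := by
            rw [← Finset.sum_sub_distrib]
            refine Finset.sum_congr rfl fun x _ => ?_
            rw [← Finset.sum_sub_distrib]
            exact Finset.sum_congr rfl fun a _ => by ring
        _ = ∑ x : Fin n → K, ∑ a : ↥I → K,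
              (Real.log (q (substGenome I x a)) - Real.log (q x))
                * (φ (subword I x) a * marginal (μ t) I a * μ t x) := by
            rw [hA, ← Finset.sum_sub_distrib]
            refine Finset.sum_congr rfl fun x _ => ?_
            rw [← Finset.sum_sub_distrib]
            exact Finset.sum_congr rfl fun a _ => by ring
        _ = ∑ x : Fin n → K,
              (∑ a : ↥I → K, (Real.log (marginal q I a)
                  - Real.log (marginal q I (subword I x)))
                * (φ (subword I x) a * marginal (μ t) I a)) * μ t x := by
            refine Finset.sum_congr rfl fun x _ => ?_
            rw [Finset.sum_mul]
            refine Finset.sum_congr rfl fun a _ => ?_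
            rw [hlog x a]
            ring
    rw [h1, sum_subword_mul I
      (fun c => ∑ a : ↥I → K, (Real.log (marginal q I a) - Real.log (marginal q I c))
        * (φ c a * marginal (μ t) I a)) (μ t)]
    have h4 : (∑ c : ↥I → K,
        (∑ a : ↥I → K, (Real.log (marginal q I a) - Real.log (marginal q I c))
          * (φ c a * marginal (μ t) I a)) * marginal (μ t) I c)
      + (∑ c : ↥I → K,
        (∑ a : ↥I → K, (Real.log (marginal q I a) - Real.log (marginal q I c))
          * (φ c a * marginal (μ t) I a)) * marginal (μ t) I c) = 0 := by
      have hswap : ∑ c : ↥I → K,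
          (∑ a : ↥I → K, (Real.log (marginal q I a) - Real.log (marginal q I c))
            * (φ c a * marginal (μ t) I a)) * marginal (μ t) I c
          = ∑ c : ↥I → K, ∑ a : ↥I → K,
            ((Real.log (marginal q I a) - Real.log (marginal q I c))
              * (φ c a * marginal (μ t) I a)) * marginal (μ t) I c := by
        exact Finset.sum_congr rfl fun c _ => by rw [Finset.sum_mul]
      rw [hswap]
      nth_rewrite 1 [Finset.sum_comm]
      rw [← Finset.sum_add_distrib]
      refine Finset.sum_eq_zero fun c _ => ?_
      rw [← Finset.sum_add_distrib]
      refine Finset.sum_eq_zero fun a _ => ?_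
      rw [hφ_symm c a]
      ring
    linarith
  -- assemble
  calc ∑ x, Real.log (q x) * recRHS I φ κ (μ t) x
      = κ * ∑ x : Fin n → K, ∑ a : ↥I → K,
        Real.log (q x) * (φ a (subword I x) * marginal (μ t) I (subword I x)
            * μ t (substGenome I x a)
          - φ (subword I x) a * marginal (μ t) I a * μ t x) := by
        rw [Finset.mul_sum]
        refine Finset.sum_congr rfl fun x _ => ?_
        rw [recRHS, mul_left_comm, Finset.mul_sum]
    _ = 0 := by rw [key, mul_zero]
end
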